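/- arXiv:1306.3497 — 2 statements merged into one kernel-verified Lean document; each statement's English description precedes it below -/
import Mathlib

section
/- Let n ≥ 2 and let G be a saturated tropical curve in the interior K° of the standard n-simplex K ⊂ ℝ^n. For each facet F of K, let d_F be the number of intersection points of the closure Ḡ with F, counted with multiplicity (each intersection point counted with the multiplicity of the corresponding edge of G). Then d_F takes the same value for all n+1 facets of K. -/
open Set MeasureTheory
open scoped ENNReal NNReal Classical

noncomputable section

/-- Euclidean space `ℝ^n`. -/
abbrev Euc (n : ℕ) := EuclideanSpace ℝ (Fin n)

/-- The real vector in `ℝ^n` corresponding to an integer vector. -/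
def intVec {n : ℕ} (w : Fin n → ℤ) : Euc n := WithLp.toLp 2 (fun i => (w i : ℝ))

/-- An edge of a tropical curve: its carrier set, its set of endpoints (lying in the
ambient open set), and a chosen integer representative of its weight
(the weight is really the class of `weight` up to sign). -/
structure TropEdge (n : ℕ) where
  carrier : Set (Euc n)
  ends : Finset (Euc n)
  weight : Fin n → ℤ

namespace TropEdge

/-- The real vector corresponding to the chosen representative of the weight. -/
def wR {n : ℕ} (e : TropEdge n) : Euc n := intVec e.weight

/-- The multiplicity of an edge: the natural number `|k|` such that the weight is
`k` times a primitive integral vector, i.e. the gcd of its components. -/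
def mult {n : ℕ} (e : TropEdge n) : ℕ :=
  Finset.univ.gcd fun i => (e.weight i).natAbs

end TropEdge

/-- The half-open segment/ray `{v + t • u : 0 ≤ t < T}`, where `T ∈ (0, ∞]`. -/
def rayTo {n : ℕ} (v u : Euc n) (T : ℝ≥0∞) : Set (Euc n) :=
  {x | ∃ t : ℝ, 0 ≤ t ∧ ENNReal.ofReal t < T ∧ x = v + t • u}

/-- A tropical curve in an open subset `U ⊆ ℝ^n`: a finite vertex set, a finite edge
set, each edge an internal edge (a closed segment contained in `U` with two distinct
vertices as endpoints) or an unbounded edge (`{v + t • u : 0 ≤ t < T} ∩ U` whose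
closure is not contained in `U`), with weights parallel to the edge directions;
distinct edges meet only in common vertices, every vertex lies on at least three
edges, and the balancing condition holds at every vertex. -/
structure TropicalCurve (n : ℕ) (U : Set (Euc n)) : Type where
  verts : Finset (Euc n)
  edges : Finset (TropEdge n)
  verts_mem : ∀ v ∈ verts, v ∈ U
  weight_ne : ∀ e ∈ edges, e.weight ≠ 0
  edge_shape : ∀ e ∈ edges,
    (∃ a ∈ verts, ∃ b ∈ verts, a ≠ b ∧ e.ends = {a, b} ∧
      e.carrier = segment ℝ a b ∧ segment ℝ a b ⊆ U ∧
      ∃ c : ℝ, c ≠ 0 ∧ b - a = c • e.wR) ∨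
    (∃ v ∈ verts, ∃ u : Euc n, u ≠ 0 ∧ ∃ T : ℝ≥0∞, 0 < T ∧
      e.ends = {v} ∧ e.carrier = rayTo v u T ∩ U ∧
      ¬ closure (rayTo v u T ∩ U) ⊆ U ∧
      ∃ c : ℝ, c ≠ 0 ∧ u = c • e.wR)
  edges_meet : ∀ e ∈ edges, ∀ f ∈ edges, e ≠ f →
    ∀ x ∈ e.carrier ∩ f.carrier, x ∈ verts
  three_valent : ∀ v ∈ verts, 3 ≤ (edges.filter fun e => v ∈ e.ends).card
  balanced : ∀ v ∈ verts, ∃ ε : TropEdge n → ℤ,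
    (∀ e ∈ edges, v ∈ e.ends →
      (ε e = 1 ∨ ε e = -1) ∧
      ∃ δ : ℝ, 0 < δ ∧ ∀ t : ℝ, 0 < t → t < δ →
        v + (t * (ε e : ℝ)) • e.wR ∈ e.carrier) ∧
    ∑ e ∈ edges.filter (fun e => v ∈ e.ends), ε e • e.weight = 0

namespace TropicalCurve

variable {n : ℕ} {U : Set (Euc n)}

/-- The underlying set of a tropical curve: the union of the carriers of its edges. -/
def support (G : TropicalCurve n U) : Set (Euc n) :=
  ⋃ e ∈ G.edges, e.carrier

/-- The tropical area of the part of `G` lying in `W`: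
`∑_e length(e ∩ W) · ‖w_e‖` (computed with the one-dimensional Hausdorff measure,
with values in `[0, ∞]`). -/
def areaOn (G : TropicalCurve n U) (W : Set (Euc n)) : ℝ≥0∞ :=
  ∑ e ∈ G.edges, μH[1] (e.carrier ∩ W) * (‖e.wR‖₊ : ℝ≥0∞)

/-- The tropical area of `G`: `∑_e length(e) · ‖w_e‖`. -/
def area (G : TropicalCurve n U) : ℝ≥0∞ :=
  ∑ e ∈ G.edges, μH[1] e.carrier * (‖e.wR‖₊ : ℝ≥0∞)

end TropicalCurve

/-- The standard `n`-simplex: the convex hull of `0` and the standard basis vectors. -/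
def stdSimp (n : ℕ) : Set (Euc n) :=
  convexHull ℝ (insert (0 : Euc n) {x | ∃ i : Fin n, x = EuclideanSpace.single i (1 : ℝ)})

/-- The `n+1` facets of the standard simplex: for `i < n` the facet in `{x_i = 0}`,
and for `i = n` the facet in `{x_1 + ⋯ + x_n = 1}`. -/
def sFacet (n : ℕ) (i : Fin (n + 1)) : Set (Euc n) :=
  if h : (i : ℕ) < n then stdSimp n ∩ {x | x ⟨i, h⟩ = 0}
  else stdSimp n ∩ {x | ∑ j, x j = 1}

/-- The `(n-2)`-skeleton of the boundary of the standard simplex: the union of all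
faces of dimension at most `n - 2`, i.e. of all pairwise intersections of facets. -/
def sSkel (n : ℕ) : Set (Euc n) :=
  ⋃ i : Fin (n + 1), ⋃ j : Fin (n + 1), ⋃ _ : i ≠ j, sFacet n i ∩ sFacet n j

/-- The inward integral normal direction of the `i`-th facet of the standard simplex. -/
def sNormal (n : ℕ) (i : Fin (n + 1)) : Fin n → ℤ :=
  if h : (i : ℕ) < n then Pi.single ⟨i, h⟩ 1 else fun _ => 1

/-- A tropical curve in the interior of the standard simplex is saturated if its closure
avoids the `(n-2)`-skeleton of the boundary and meets the facets perpendicularly: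
every edge whose closure meets a facet has weight parallel to the normal of that facet. -/
def Saturated {n : ℕ} (G : TropicalCurve n (interior (stdSimp n))) : Prop :=
  closure G.support ∩ sSkel n = ∅ ∧
  ∀ e ∈ G.edges, ∀ i : Fin (n + 1),
    (closure e.carrier ∩ sFacet n i).Nonempty →
    ∃ k : ℤ, e.weight = k • sNormal n i

/-- The number of intersection points of the closure of `G` with the `i`-th facet of the
standard simplex, counted with the multiplicities of the corresponding edges. -/
def facetCount {n : ℕ} (G : TropicalCurve n (interior (stdSimp n)))
    (i : Fin (n + 1)) : ℕ :=
  ∑ e ∈ G.edges.filter (fun e => (closure e.carrier ∩ sFacet n i).Nonempty), e.mult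

/-! ### Auxiliary lemmas for the proof -/

section Aux

theorem contSum (n : ℕ) : Continuous fun x : Euc n => ∑ j, x j :=
  continuous_finset_sum _ fun i _ => (EuclideanSpace.proj i).continuous

theorem stdSimp_eq (n : ℕ) :
    stdSimp n = {x : Euc n | (∀ i, 0 ≤ x i) ∧ ∑ j, x j ≤ 1} := by
  apply le_antisymm
  · apply convexHull_min
    · rintro x (rfl | ⟨i, rfl⟩)
      · exact ⟨fun i => le_rfl, by simp [show ∀ j : Fin n, (0:Euc n) j = 0 from fun _ => rfl]⟩
      · constructor
        · intro j; rw [EuclideanSpace.single_apply]; positivity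
        · simp [EuclideanSpace.single_apply]
    · have h1 : ∀ i : Fin n, Convex ℝ {x : Euc n | 0 ≤ x i} := by
        intro i
        exact convex_halfSpace_ge ⟨fun a b => rfl, fun c a => rfl⟩ 0
      have h2 : Convex ℝ {x : Euc n | ∑ j, x j ≤ 1} := by
        apply convex_halfSpace_le
        constructor
        · intro a b; simp [Finset.sum_add_distrib]
        · intro c a; simp [Finset.mul_sum]
      have h3 : {x : Euc n | (∀ i, 0 ≤ x i) ∧ ∑ j, x j ≤ 1}
          = (⋂ i, {x : Euc n | 0 ≤ x i}) ∩ {x : Euc n | ∑ j, x j ≤ 1} := by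
        ext x; simp [Set.mem_iInter]
      rw [h3]
      exact (convex_iInter h1).inter h2
  · intro x hx
    obtain ⟨hx0, hx1⟩ := hx
    set S := insert (0 : Euc n) {x : Euc n | ∃ i : Fin n, x = EuclideanSpace.single i (1 : ℝ)} with hS
    have hconv : Convex ℝ (convexHull ℝ S) := convex_convexHull ℝ S
    have key : x = ∑ j : Option (Fin n), (Option.elim j (1 - ∑ i, x i) x) •
        (Option.elim j (0 : Euc n) (fun i => EuclideanSpace.single i (1:ℝ))) := by
      rw [Fintype.sum_option]
      rw [WithLp.ext_iff]
      apply funext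
      intro i
      show x i = ((1 - ∑ j, x j) • (0:Euc n) + ∑ j : Fin n, x j • EuclideanSpace.single j (1:ℝ)) i
      rw [show ((1 - ∑ j, x j) • (0:Euc n) + ∑ j : Fin n, x j • EuclideanSpace.single j (1:ℝ)) i
        = ((1 - ∑ j, x j) • (0:Euc n)) i + (∑ j : Fin n, x j • EuclideanSpace.single j (1:ℝ)) i from rfl]
      rw [WithLp.ofLp_sum, Finset.sum_apply]
      show x i = (1 - ∑ j, x j) * 0 + ∑ j : Fin n, x j * (EuclideanSpace.single j (1:ℝ)) i
      simp [EuclideanSpace.single_apply]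
    rw [key]
    apply hconv.sum_mem
    · rintro (_ | j) _
      · simpa using hx1
      · exact hx0 j
    · simp only [Option.elim]; rw [Fintype.sum_option]; simp
    · rintro (_ | j) _
      · exact subset_convexHull ℝ S (by simp [hS])
      · exact subset_convexHull ℝ S (by simp only [hS, Set.mem_insert_iff]; right; exact ⟨j, rfl⟩)

theorem isClosed_stdSimp (n : ℕ) : IsClosed (stdSimp n) := by
  rw [stdSimp_eq]
  have h3 : {x : Euc n | (∀ i, 0 ≤ x i) ∧ ∑ j, x j ≤ 1}
      = (⋂ i, {x : Euc n | 0 ≤ x i}) ∩ {x : Euc n | ∑ j, x j ≤ 1} := by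
    ext x; simp [Set.mem_iInter]
  rw [h3]
  exact (isClosed_iInter fun i =>
    isClosed_le continuous_const (EuclideanSpace.proj i).continuous).inter
    (isClosed_le (contSum n) continuous_const)

theorem interior_stdSimp (n : ℕ) :
    interior (stdSimp n) = {x : Euc n | (∀ i, 0 < x i) ∧ ∑ j, x j < 1} := by
  apply le_antisymm
  · intro x hx
    have hxs : x ∈ stdSimp n := interior_subset hx
    rw [stdSimp_eq] at hxs
    obtain ⟨ε, hε, hball⟩ := Metric.isOpen_iff.mp isOpen_interior x hx
    constructor
    · intro i
      rcases lt_or_ge 0 (x i) with h | h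
      · exact h
      · exfalso
        have hxi : x i = 0 := le_antisymm h (hxs.1 i)
        have hy : x - (ε/2) • EuclideanSpace.single i (1:ℝ) ∈ Metric.ball x ε := by
          rw [Metric.mem_ball, dist_eq_norm]
          have h4 : x - (ε/2) • EuclideanSpace.single i (1:ℝ) - x
              = -((ε/2) • EuclideanSpace.single i (1:ℝ)) := by abel
          rw [h4, norm_neg, norm_smul, EuclideanSpace.norm_single]
          simp [abs_of_pos hε]; linarith
        have h5 := (interior_subset (hball hy))
        rw [stdSimp_eq] at h5
        have h2 := h5.1 i
        have h6 : (x - (ε/2) • EuclideanSpace.single i (1:ℝ)) i = x i - ε/2 := by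
          show x i - (ε/2) * (EuclideanSpace.single i (1:ℝ)) i = _
          rw [EuclideanSpace.single_apply]; simp
        rw [h6, hxi] at h2
        linarith
    · rcases lt_or_ge (∑ j, x j) 1 with h | h
      · exact h
      · exfalso
        have hn : 0 < n := by
          by_contra hn
          push_neg at hn
          interval_cases n
          simp at h; linarith
        have i0 : Fin n := ⟨0, hn⟩
        have hy : x + (ε/2) • EuclideanSpace.single i0 (1:ℝ) ∈ Metric.ball x ε := by
          rw [Metric.mem_ball, dist_eq_norm]
          have h4 : x + (ε/2) • EuclideanSpace.single i0 (1:ℝ) - x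
              = (ε/2) • EuclideanSpace.single i0 (1:ℝ) := by abel
          rw [h4, norm_smul, EuclideanSpace.norm_single]
          simp [abs_of_pos hε]; linarith
        have hmem := interior_subset (hball hy)
        rw [stdSimp_eq] at hmem
        have h2 := hmem.2
        have h6 : ∑ j, (x + (ε/2) • EuclideanSpace.single i0 (1:ℝ)) j
            = (∑ j, x j) + ε/2 := by
          have h7 : ∀ j, (x + (ε/2) • EuclideanSpace.single i0 (1:ℝ)) j
              = x j + (ε/2) * (EuclideanSpace.single i0 (1:ℝ)) j := fun j => rfl
          simp only [h7, Finset.sum_add_distrib, ← Finset.mul_sum]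
          simp [EuclideanSpace.single_apply]
        rw [h6] at h2
        have hs1 : (1:ℝ) ≤ ∑ j, x j := h
        linarith
  · intro x hx
    have hopen : IsOpen {x : Euc n | (∀ i, 0 < x i) ∧ ∑ j, x j < 1} := by
      have h3 : {x : Euc n | (∀ i, 0 < x i) ∧ ∑ j, x j < 1}
          = (⋂ i, {x : Euc n | 0 < x i}) ∩ {x : Euc n | ∑ j, x j < 1} := by
        ext x; simp [Set.mem_iInter]
      rw [h3]
      exact (isOpen_iInter_of_finite fun i =>
        isOpen_lt continuous_const (EuclideanSpace.proj i).continuous).inter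
        (isOpen_lt (contSum n) continuous_const)
    apply interior_maximal _ hopen hx
    intro y hy
    rw [stdSimp_eq]
    exact ⟨fun i => (hy.1 i).le, hy.2.le⟩

theorem facet_inter_interior {n : ℕ} (i : Fin (n+1)) :
    ∀ x ∈ sFacet n i, x ∉ interior (stdSimp n) := by
  intro x hx hxi
  rw [interior_stdSimp] at hxi
  rw [sFacet] at hx
  split_ifs at hx with h
  · have := hxi.1 ⟨i, h⟩
    have := hx.2
    simp only [Set.mem_setOf_eq] at this
    linarith
  · have := hxi.2
    have h2 := hx.2
    simp only [Set.mem_setOf_eq] at h2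
    linarith

theorem exists_facet {n : ℕ} {x : Euc n} (hx : x ∈ stdSimp n)
    (hxi : x ∉ interior (stdSimp n)) : ∃ i, x ∈ sFacet n i := by
  have hx' := hx
  rw [stdSimp_eq] at hx'
  rw [interior_stdSimp] at hxi
  simp only [Set.mem_setOf_eq, not_and_or, not_forall, not_lt] at hxi
  rcases hxi with ⟨i, hi⟩ | h
  · refine ⟨⟨(i : ℕ), by omega⟩, ?_⟩
    rw [sFacet, dif_pos (show ((⟨(i:ℕ), by omega⟩ : Fin (n+1)) : ℕ) < n from i.isLt)]
    refine ⟨hx, ?_⟩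
    show x ⟨(i:ℕ), i.isLt⟩ = 0
    have h8 : (⟨(i:ℕ), i.isLt⟩ : Fin n) = i := rfl
    rw [h8]
    exact le_antisymm hi (hx'.1 i)
  · refine ⟨Fin.last n, ?_⟩
    rw [sFacet, dif_neg (by rw [Fin.val_last]; omega)]
    exact ⟨hx, le_antisymm hx'.2 h⟩

theorem isClosed_segment' {n : ℕ} (a b : Euc n) : IsClosed (segment ℝ a b) := by
  rw [segment_eq_image']
  exact (isCompact_Icc.image
    (continuous_const.add (continuous_id.smul continuous_const))).isClosed

theorem wR_ne_zero {n : ℕ} {e : TropEdge n} (h : e.weight ≠ 0) : e.wR ≠ 0 := by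
  intro h0
  apply h
  funext j
  have h1 : ((e.weight j : ℤ) : ℝ) = 0 := by
    show e.wR j = 0
    rw [h0]; rfl
  show e.weight j = 0
  exact_mod_cast h1

theorem sNormal_apply_self {n : ℕ} {j : Fin (n+1)} (hj : (j:ℕ) < n) :
    sNormal n j ⟨j, hj⟩ = 1 := by
  rw [sNormal, dif_pos hj]; exact Pi.single_eq_same _ _

theorem sNormal_apply_ne {n : ℕ} {j : Fin (n+1)} (hj : (j:ℕ) < n) (m : Fin n)
    (hm : m ≠ ⟨j, hj⟩) : sNormal n j m = 0 := by
  rw [sNormal, dif_pos hj]; exact Pi.single_eq_of_ne hm _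

theorem sNormal_last_apply {n : ℕ} {j : Fin (n+1)} (hj : ¬ (j:ℕ) < n) (m : Fin n) :
    sNormal n j m = 1 := by rw [sNormal, dif_neg hj]

theorem mult_eq {n : ℕ} (hn : 0 < n) {e : TropEdge n} {k : ℤ} {j : Fin (n+1)}
    (hw : e.weight = k • sNormal n j) : e.mult = k.natAbs := by
  have hval : ∀ m : Fin n, (e.weight m).natAbs = k.natAbs * (sNormal n j m).natAbs := by
    intro m
    rw [hw]
    show ((k • sNormal n j) m).natAbs = _
    rw [Pi.smul_apply, smul_eq_mul, Int.natAbs_mul]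
  rw [TropEdge.mult]
  apply Nat.dvd_antisymm
  · by_cases hj : (j:ℕ) < n
    · have h1 : (e.weight ⟨j, hj⟩).natAbs = k.natAbs := by
        rw [hval, sNormal_apply_self hj]; simp
      exact h1 ▸ Finset.gcd_dvd (Finset.mem_univ _)
    · have h1 : (e.weight ⟨0, hn⟩).natAbs = k.natAbs := by
        rw [hval, sNormal_last_apply hj]; simp
      exact h1 ▸ Finset.gcd_dvd (Finset.mem_univ _)
  · exact Finset.dvd_gcd fun m _ => (hval m) ▸ Dvd.intro _ rfl

theorem normals_indep {n : ℕ} (hn : 2 ≤ n) {j j' : Fin (n+1)} {k k' : ℤ}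
    (hk : k ≠ 0) (h : k • sNormal n j = k' • sNormal n j') : j = j' := by
  have happ : ∀ m : Fin n, k * sNormal n j m = k' * sNormal n j' m := by
    intro m
    have := congrFun h m
    rwa [Pi.smul_apply, Pi.smul_apply, smul_eq_mul, smul_eq_mul] at this
  by_cases hj : (j:ℕ) < n <;> by_cases hj' : (j':ℕ) < n
  · by_contra hne
    have hne' : (⟨(j:ℕ), hj⟩ : Fin n) ≠ ⟨(j':ℕ), hj'⟩ := by
      intro hh
      simp only [Fin.mk.injEq] at hh
      exact hne (Fin.ext hh)
    have h1 := happ ⟨(j:ℕ), hj⟩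
    rw [sNormal_apply_self hj, sNormal_apply_ne hj' _ hne'] at h1
    simp at h1
    exact hk h1
  · exfalso
    obtain ⟨m, hm⟩ : ∃ m : Fin n, m ≠ ⟨(j:ℕ), hj⟩ := by
      by_cases h0 : (j:ℕ) = 0
      · refine ⟨⟨1, by omega⟩, fun hh => ?_⟩
        simp only [Fin.mk.injEq] at hh
        omega
      · refine ⟨⟨0, by omega⟩, fun hh => ?_⟩
        simp only [Fin.mk.injEq] at hh
        omega
    have h1 := happ m
    rw [sNormal_apply_ne hj _ hm, sNormal_last_apply hj'] at h1
    have h2 := happ ⟨(j:ℕ), hj⟩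
    rw [sNormal_apply_self hj, sNormal_last_apply hj'] at h2
    simp at h1 h2
    omega
  · exfalso
    obtain ⟨m, hm⟩ : ∃ m : Fin n, m ≠ ⟨(j':ℕ), hj'⟩ := by
      by_cases h0 : (j':ℕ) = 0
      · refine ⟨⟨1, by omega⟩, fun hh => ?_⟩
        simp only [Fin.mk.injEq] at hh
        omega
      · refine ⟨⟨0, by omega⟩, fun hh => ?_⟩
        simp only [Fin.mk.injEq] at hh
        omega
    have h1 := happ m
    rw [sNormal_last_apply hj, sNormal_apply_ne hj' _ hm] at h1
    simp at h1
    exact hk h1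
  · have hjl := j.isLt
    have hjl' := j'.isLt
    exact Fin.ext (by omega)

theorem endpoint_sign {n : ℕ} {p w : Euc n} (hw : w ≠ 0) {c : ℝ} (hc : c ≠ 0) {ε : ℤ}
    (hε : ε = 1 ∨ ε = -1) {S : Set (Euc n)}
    (hS : ∀ x ∈ S, ∃ θ : ℝ, 0 ≤ θ ∧ x = p + (θ * c) • w)
    (hd : ∃ δ : ℝ, 0 < δ ∧ ∀ t : ℝ, 0 < t → t < δ → p + (t * (ε:ℝ)) • w ∈ S) :
    0 < (ε:ℝ) * c := by
  obtain ⟨δ, hδ, hmem⟩ := hd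
  obtain ⟨θ, hθ0, hx⟩ := hS _ (hmem (δ/2) (by linarith) (by linarith))
  have heq : (δ/2) * (ε:ℝ) = θ * c :=
    smul_left_injective ℝ hw (add_left_cancel hx)
  have hεne : (ε:ℝ) = 1 ∨ (ε:ℝ) = -1 := by
    rcases hε with h|h <;> rw [h] <;> simp
  have habs : (δ/2) * (ε:ℝ) ≠ 0 := by
    rcases hεne with h|h <;> rw [h] <;> intro hh <;> · simp at hh; linarith
  have hθc : θ * c ≠ 0 := heq ▸ habs
  have hθpos : 0 < θ := by
    rcases lt_or_eq_of_le hθ0 with h|h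
    · exact h
    · exfalso; apply hθc; rw [← h]; ring
  have hkey : ((δ/2) * (ε:ℝ)) * (θ * c) = (θ*c) * (θ*c) := by rw [heq]
  have hsq : 0 < (θ*c) * (θ*c) := mul_self_pos.mpr hθc
  nlinarith [mul_pos (show (0:ℝ) < δ/2 by linarith) hθpos]

theorem ray_exit_sign {n : ℕ} {v u x : Euc n} {T : ℝ≥0∞} {W : Set (Euc n)}
    (hx : x ∈ closure (rayTo v u T ∩ W)) (g : Euc n → ℝ) (hg : Continuous g)
    (haff : ∀ t : ℝ, g (v + t • u) = g v + t * g u)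
    (hlt : g x < g v) : g u < 0 := by
  obtain ⟨y, hy, hlim⟩ := mem_closure_iff_seq_limit.mp hx
  have htend : Filter.Tendsto (fun m => g (y m)) Filter.atTop (nhds (g x)) :=
    (hg.tendsto x).comp hlim
  obtain ⟨m, hm⟩ := (htend.eventually_lt_const hlt).exists
  obtain ⟨⟨t, ht0, htT, hyt⟩, hyW⟩ := hy m
  rw [hyt, haff] at hm
  by_contra hcon
  push_neg at hcon
  nlinarith [mul_nonneg ht0 hcon]

theorem epsOf_eq {n : ℕ} {U : Set (Euc n)} (G : TropicalCurve n U) {v : Euc n}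
    (hv : v ∈ G.verts) :
    (fun w => if hw : w ∈ G.verts then (G.balanced w hw).choose else fun _ => 0) v
      = (G.balanced v hv).choose := dif_pos hv

end Aux

/-- a saturated tropical curve in the interior of the standard simplex
meets all facets of the simplex in the same number of points, counted with
multiplicity. -/
theorem facet_counts_equal (n : ℕ) (hn : 2 ≤ n)
    (G : TropicalCurve n (interior (stdSimp n))) (hG : Saturated G) :
    ∀ i j : Fin (n + 1), facetCount G i = facetCount G j := by
  suffices h : ∀ i : Fin (n+1), facetCount G i = facetCount G (Fin.last n) by
    intro i j; rw [h i, h j]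
  intro I
  by_cases hI : (I:ℕ) < n
  case neg =>
    have hIl : I = Fin.last n := Fin.ext (by rw [Fin.val_last]; have := I.isLt; omega)
    rw [hIl]
  set i0 : Fin n := ⟨(I:ℕ), hI⟩ with hi0
  let ε : Euc n → TropEdge n → ℤ :=
    fun w => if hw : w ∈ G.verts then (G.balanced w hw).choose else fun _ => 0
  have hεfun : ∀ v (hv : v ∈ G.verts), ε v = (G.balanced v hv).choose :=
    fun v hv => dif_pos hv
  have hε1 : ∀ v (hv : v ∈ G.verts), ∀ e ∈ G.edges, v ∈ e.ends →
      (ε v e = 1 ∨ ε v e = -1) ∧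
      ∃ δ : ℝ, 0 < δ ∧ ∀ t : ℝ, 0 < t → t < δ →
        v + (t * (ε v e : ℝ)) • e.wR ∈ e.carrier := by
    intro v hv e he hve
    rw [hεfun v hv]
    exact (G.balanced v hv).choose_spec.1 e he hve
  have hε2 : ∀ v, v ∈ G.verts →
      ∑ e ∈ G.edges.filter (fun e => v ∈ e.ends), ε v e * e.weight i0 = 0 := by
    intro v hv
    have h0 := (G.balanced v hv).choose_spec.2
    rw [← hεfun v hv] at h0
    simpa using congrFun h0 i0
  have hswap : ∑ v ∈ G.verts, ∑ e ∈ G.edges.filter (fun e => v ∈ e.ends),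
        ε v e * e.weight i0
      = ∑ e ∈ G.edges, ∑ v ∈ G.verts.filter (fun v => v ∈ e.ends),
        ε v e * e.weight i0 := by
    simp only [Finset.sum_filter]
    exact Finset.sum_comm
  have hzero : ∑ e ∈ G.edges, ∑ v ∈ G.verts.filter (fun v => v ∈ e.ends),
      ε v e * e.weight i0 = 0 := by
    rw [← hswap]
    exact Finset.sum_eq_zero hε2
  have hclaim : ∀ e ∈ G.edges,
      ∑ v ∈ G.verts.filter (fun v => v ∈ e.ends), ε v e * e.weight i0
      = (if (closure e.carrier ∩ sFacet n (Fin.last n)).Nonempty then (e.mult : ℤ) else 0)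
        - (if (closure e.carrier ∩ sFacet n I).Nonempty then (e.mult : ℤ) else 0) := by
    intro e he
    have hwne0 : e.weight ≠ 0 := G.weight_ne e he
    have hwne : e.wR ≠ 0 := wR_ne_zero hwne0
    rcases G.edge_shape e he with ⟨a, ha, b, hb, hab, hends, hcar, hsub, c, hc, hba⟩ |
      ⟨v, hv, u, hu, T, hT, hends, hcar, hncl, c, hc, huc⟩
    · -- internal edge
      have hclosed : closure e.carrier = e.carrier := by
        rw [hcar]
        exact (isClosed_segment' a b).closure_eq
      have hnomeet : ∀ i : Fin (n+1), ¬ (closure e.carrier ∩ sFacet n i).Nonempty := by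
        rintro i ⟨x, hx1, hx2⟩
        rw [hclosed, hcar] at hx1
        exact facet_inter_interior i x hx2 (hsub hx1)
      rw [if_neg (hnomeet _), if_neg (hnomeet _)]
      have hfil : G.verts.filter (fun v => v ∈ e.ends) = {a, b} := by
        ext x
        simp only [Finset.mem_filter, hends, Finset.mem_insert, Finset.mem_singleton]
        constructor
        · exact fun h => h.2
        · rintro (rfl | rfl)
          · exact ⟨ha, Or.inl rfl⟩
          · exact ⟨hb, Or.inr rfl⟩
      rw [hfil, Finset.sum_insert (by simp [hab]), Finset.sum_singleton]
      have haend : a ∈ e.ends := by rw [hends]; exact Finset.mem_insert_self a {b}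
      have hbend : b ∈ e.ends := by rw [hends]; simp
      obtain ⟨hεa, hda⟩ := hε1 a ha e he haend
      obtain ⟨hεb, hdb⟩ := hε1 b hb e he hbend
      have hSa : ∀ x ∈ e.carrier, ∃ θ : ℝ, 0 ≤ θ ∧ x = a + (θ * c) • e.wR := by
        intro x hx
        rw [hcar, segment_eq_image'] at hx
        obtain ⟨θ, hθ, rfl⟩ := hx
        exact ⟨θ, hθ.1, by simp only [hba, smul_smul]⟩
      have hSb : ∀ x ∈ e.carrier, ∃ θ : ℝ, 0 ≤ θ ∧ x = b + (θ * (-c)) • e.wR := by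
        intro x hx
        rw [hcar, segment_symm, segment_eq_image'] at hx
        obtain ⟨θ, hθ, rfl⟩ := hx
        refine ⟨θ, hθ.1, ?_⟩
        have hab' : a - b = (-c) • e.wR := by rw [neg_smul, ← hba, neg_sub]
        simp only [hab', smul_smul]
      have hsa := endpoint_sign hwne hc hεa hSa hda
      have hsb := endpoint_sign hwne (neg_ne_zero.mpr hc) hεb hSb hdb
      have hcancel : ε a e + ε b e = 0 := by
        rcases hεa with h1|h1 <;> rcases hεb with h2|h2
        · exfalso; rw [h1] at hsa; rw [h2] at hsb; push_cast at hsa hsb; linarith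
        · rw [h1, h2]; decide
        · rw [h1, h2]; decide
        · exfalso; rw [h1] at hsa; rw [h2] at hsb; push_cast at hsa hsb; linarith
      calc ε a e * e.weight i0 + ε b e * e.weight i0
          = (ε a e + ε b e) * e.weight i0 := by ring
        _ = 0 - 0 := by rw [hcancel, zero_mul, sub_zero]
    · -- unbounded edge
      have hfil : G.verts.filter (fun w => w ∈ e.ends) = {v} := by
        ext x
        simp only [Finset.mem_filter, hends, Finset.mem_singleton]
        exact ⟨fun h => h.2, fun h => ⟨h ▸ hv, h⟩⟩
      rw [hfil, Finset.sum_singleton]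
      have hclsub : closure e.carrier ⊆ stdSimp n := by
        rw [hcar]
        refine closure_minimal ?_ (isClosed_stdSimp n)
        exact Set.inter_subset_right.trans interior_subset
      have hncl' : ¬ closure e.carrier ⊆ interior (stdSimp n) := by
        rw [hcar]; exact hncl
      obtain ⟨x, hx1, hx2⟩ := Set.not_subset.mp hncl'
      obtain ⟨j, hj⟩ := exists_facet (hclsub hx1) hx2
      have hjne : (closure e.carrier ∩ sFacet n j).Nonempty := ⟨x, hx1, hj⟩
      obtain ⟨k, hk⟩ := hG.2 e he j hjne
      have hk0 : k ≠ 0 := by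
        rintro rfl
        apply hwne0
        rw [hk, zero_smul]
      have hmeet : ∀ j', (closure e.carrier ∩ sFacet n j').Nonempty ↔ j' = j := by
        intro j'
        constructor
        · intro hj'
          obtain ⟨k', hk'⟩ := hG.2 e he j' hj'
          have heqn : k • sNormal n j = k' • sNormal n j' := by rw [← hk, ← hk']
          exact (normals_indep hn hk0 heqn).symm
        · rintro rfl; exact hjne
      obtain ⟨hεv, hdv⟩ := hε1 v hv e he (by rw [hends]; exact Finset.mem_singleton_self v)
      have hεc : 0 < (ε v e : ℝ) * c := by
        refine endpoint_sign hwne hc hεv ?_ hdv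
        intro y hy
        rw [hcar] at hy
        obtain ⟨t, ht0, htT, hyt⟩ := hy.1
        exact ⟨t, ht0, by rw [hyt, huc, smul_smul]⟩
      have hvU := G.verts_mem v hv
      rw [interior_stdSimp] at hvU
      have hwRm : ∀ m : Fin n, e.wR m = (k : ℝ) * ((sNormal n j m : ℤ) : ℝ) := by
        intro m
        show ((e.weight m : ℤ) : ℝ) = _
        rw [hk]
        have h1 : (k • sNormal n j) m = k * sNormal n j m := by
          rw [Pi.smul_apply, smul_eq_mul]
        rw [h1]
        push_cast
        ring
      have hray : x ∈ closure (rayTo v u T ∩ interior (stdSimp n)) := by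
        rw [← hcar]; exact hx1
      by_cases hjn : (j:ℕ) < n
      · -- facet in a coordinate hyperplane
        have hxi1 : x ⟨(j:ℕ), hjn⟩ = 0 := by
          rw [sFacet, dif_pos hjn] at hj
          exact hj.2
        have hui1 : u ⟨(j:ℕ), hjn⟩ = c * (k:ℝ) := by
          have h1 : u ⟨(j:ℕ), hjn⟩ = c * e.wR ⟨(j:ℕ), hjn⟩ := by rw [huc]; rfl
          rw [h1, hwRm, sNormal_apply_self hjn]
          push_cast
          ring
        have hneg : u ⟨(j:ℕ), hjn⟩ < 0 := by
          refine ray_exit_sign hray (fun z => z ⟨(j:ℕ), hjn⟩)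
            (EuclideanSpace.proj _).continuous (fun t => rfl) ?_
          show x ⟨(j:ℕ), hjn⟩ < v ⟨(j:ℕ), hjn⟩
          rw [hxi1]
          exact hvU.1 _
        have hck : c * (k:ℝ) < 0 := by rw [← hui1]; exact hneg
        have hek : ε v e * k < 0 := by
          have h1 : ((ε v e : ℤ) : ℝ) * ((k:ℤ):ℝ) < 0 := by
            nlinarith [mul_self_pos.mpr hc]
          exact_mod_cast h1
        have hekval : ε v e * k = -(k.natAbs : ℤ) := by
          have h2 := Int.natAbs_mul (ε v e) k
          rcases hεv with hone|hone <;> rw [hone] at hek ⊢ <;> omega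
        have hwi0 : e.weight i0 = k * (if i0 = (⟨(j:ℕ), hjn⟩ : Fin n) then 1 else 0) := by
          rw [hk]
          have h1 : (k • sNormal n j) i0 = k * sNormal n j i0 := by
            rw [Pi.smul_apply, smul_eq_mul]
          rw [h1]
          congr 1
          by_cases hii : i0 = (⟨(j:ℕ), hjn⟩ : Fin n)
          · rw [if_pos hii, hii, sNormal_apply_self hjn]
          · rw [if_neg hii, sNormal_apply_ne hjn _ hii]
        simp only [hmeet]
        have hLj : ¬ Fin.last n = j := by
          intro hh
          rw [← hh, Fin.val_last] at hjn
          omega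
        by_cases hii : i0 = (⟨(j:ℕ), hjn⟩ : Fin n)
        · have hIj : I = j := by
            rw [hi0] at hii
            simp only [Fin.mk.injEq] at hii
            exact Fin.ext hii
          rw [if_neg hLj, if_pos hIj]
          rw [hwi0, if_pos hii, mul_one, hekval, mult_eq (show 0 < n by omega) hk]
          ring
        · have hIj : ¬ I = j := by
            intro hh
            apply hii
            rw [hi0]
            simp only [Fin.mk.injEq]
            exact congrArg Fin.val hh
          rw [if_neg hLj, if_neg hIj]
          rw [hwi0, if_neg hii]
          ring
      · -- the facet in the hyperplane of coordinate sum one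
        have hxs : ∑ m, x m = 1 := by
          rw [sFacet, dif_neg hjn] at hj
          exact hj.2
        have hum : ∀ m, u m = c * (k:ℝ) := by
          intro m
          have h1 : u m = c * e.wR m := by rw [huc]; rfl
          rw [h1, hwRm, sNormal_last_apply hjn]
          push_cast
          ring
        have hsumu : ∑ m, u m = (n : ℝ) * (c * (k:ℝ)) := by
          rw [Finset.sum_congr rfl (fun m _ => hum m), Finset.sum_const,
            Finset.card_univ, Fintype.card_fin, nsmul_eq_mul]
        have hneg : -(∑ m, u m) < 0 := by
          refine ray_exit_sign hray (fun z => -(∑ m, z m)) ((contSum n).neg) ?_ ?_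
          · intro t
            show -(∑ m, (v + t • u) m) = -(∑ m, v m) + t * -(∑ m, u m)
            have h1 : ∀ m, (v + t • u) m = v m + t * u m := fun m => rfl
            simp only [h1, Finset.sum_add_distrib, ← Finset.mul_sum]
            ring
          · show -(∑ m, x m) < -(∑ m, v m)
            rw [hxs]
            have := hvU.2
            linarith
        have hck : 0 < c * (k:ℝ) := by
          have h1 : 0 < ∑ m, u m := by linarith
          rw [hsumu] at h1
          nlinarith [show (0:ℝ) < (n:ℝ) by exact_mod_cast (show 0 < n by omega)]
        have hek : 0 < ε v e * k := by
          have h1 : 0 < ((ε v e : ℤ) : ℝ) * ((k:ℤ):ℝ) := by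
            nlinarith [mul_self_pos.mpr hc]
          exact_mod_cast h1
        have hekval : ε v e * k = (k.natAbs : ℤ) := by
          have h2 := Int.natAbs_mul (ε v e) k
          rcases hεv with hone|hone <;> rw [hone] at hek ⊢ <;> omega
        have hwi0 : e.weight i0 = k := by
          rw [hk]
          have h1 : (k • sNormal n j) i0 = k * sNormal n j i0 := by
            rw [Pi.smul_apply, smul_eq_mul]
          rw [h1, sNormal_last_apply hjn, mul_one]
        simp only [hmeet]
        have hjL : Fin.last n = j := by
          refine Fin.ext ?_
          rw [Fin.val_last]
          have := j.isLt
          omega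
        have hIj : ¬ I = j := by
          intro hh
          rw [← hh] at hjn
          exact hjn hI
        rw [if_pos hjL, if_neg hIj]
        rw [hwi0, hekval, mult_eq (show 0 < n by omega) hk]
        ring
  have htotal : (facetCount G (Fin.last n) : ℤ) - (facetCount G I : ℤ)
      = ∑ e ∈ G.edges,
        ((if (closure e.carrier ∩ sFacet n (Fin.last n)).Nonempty then (e.mult : ℤ) else 0)
          - (if (closure e.carrier ∩ sFacet n I).Nonempty then (e.mult : ℤ) else 0)) := by
    rw [Finset.sum_sub_distrib]
    rw [facetCount, facetCount]
    push_cast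
    rw [Finset.sum_filter, Finset.sum_filter]
  have h9 : (facetCount G (Fin.last n) : ℤ) - (facetCount G I : ℤ) = 0 := by
    rw [htotal, ← Finset.sum_congr rfl hclaim]
    exact hzero
  exact_mod_cast (sub_eq_zero.mp h9).symm
end
end

section
/- Let n ≥ 2, A > 0 and δ > 0. Let U ⊆ ℝ^n be open and let G be a tropical curve in U with Area(G) ≤ A. Let e be an edge of G and p a point in the relative interior of e such that the closed Euclidean ball of radius δ√n centered at p is contained in U. Then for every i ∈ {1, …, n}, |w_e^i| ≤ A/δ, where w_e^i is the i-th component of a representative of the weight of e. -/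
open Set MeasureTheory
open scoped ENNReal NNReal Classical

noncomputable section

section Flow

variable {ι : Type*} {X : Type*} [MetricSpace X]
variable (tl hd : ι → X) (ht : X → ℝ)

/-- triangle inequality along a chain of darts -/
lemma chain_edist_le : ∀ (L : List ι) (hL : L ≠ []),
    L.Chain' (fun d d' => hd d = tl d') →
    edist (tl (L.head hL)) (hd (L.getLast hL)) ≤ (L.map (fun d => edist (tl d) (hd d))).sum := by
  intro L
  induction L with
  | nil => intro h; exact absurd rfl h
  | cons d L ih =>
    intro _ hch
    cases L with
    | nil => simp
    | cons d' L' =>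
      have hch' := (List.isChain_cons_cons.mp hch)
      have h1 : edist (tl d) (hd ((d' :: L').getLast (by simp))) ≤
          edist (tl d) (hd d) + edist (tl d') (hd ((d' :: L').getLast (by simp))) := by
        calc edist (tl d) (hd ((d' :: L').getLast (by simp)))
            ≤ edist (tl d) (hd d) + edist (hd d) (hd ((d' :: L').getLast (by simp))) :=
              edist_triangle _ _ _
          _ = edist (tl d) (hd d) + edist (tl d') (hd ((d' :: L').getLast (by simp))) := by
              rw [hch'.1]
      calc edist (tl ((d :: d' :: L').head (by simp))) (hd ((d :: d' :: L').getLast (by simp)))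
          = edist (tl d) (hd ((d' :: L').getLast (by simp))) := by
            simp [List.getLast_cons]
        _ ≤ edist (tl d) (hd d) + edist (tl d') (hd ((d' :: L').getLast (by simp))) := h1
        _ ≤ edist (tl d) (hd d) + ((d' :: L').map (fun d => edist (tl d) (hd d))).sum := by
            gcongr
            exact ih (by simp) hch'.2
        _ = ((d :: d' :: L').map (fun d => edist (tl d) (hd d))).sum := by simp

/-- count of tails equals count of heads for intermediate nodes of a strictly increasing chain -/
lemma chain_count :
    ∀ (L : List ι) (hL : L ≠ []), (∀ d ∈ L, ht (tl d) < ht (hd d)) →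
    L.Chain' (fun d d' => hd d = tl d') →
    L.Pairwise (fun d d' => ht (tl d) < ht (tl d')) →
    ∀ y : X, y ≠ tl (L.head hL) → y ≠ hd (L.getLast hL) →
      L.countP (fun d => tl d = y) = L.countP (fun d => hd d = y) := by
  intro L
  induction L with
  | nil => intro h; exact absurd rfl h
  | cons d L ih =>
    intro _ hinc hch hpw y hy1 hy2
    have hinc' : ∀ e ∈ L, ht (tl e) < ht (hd e) := fun e he => hinc e (List.mem_cons_of_mem _ he)
    simp only [List.head_cons] at hy1
    rw [List.countP_cons, List.countP_cons]
    have htl0 : ¬ (tl d = y) := fun h => hy1 (h ▸ rfl)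
    cases L with
    | nil =>
      simp only [List.getLast_singleton] at hy2
      have : ¬ (hd d = y) := fun h => hy2 (h ▸ rfl)
      simp [htl0, this]
    | cons d' L' =>
      have hch' := List.isChain_cons_cons.mp hch
      have hpw' := List.pairwise_cons.mp hpw
      have hlast : (d :: d' :: L').getLast (by simp) = (d' :: L').getLast (by simp) := by
        simp [List.getLast_cons]
      rw [hlast] at hy2
      by_cases hyd : y = hd d
      · -- y is the second node
        have htld' : tl d' = y := by rw [← hch'.1, hyd]
        have h1 : (d' :: L').countP (fun e => tl e = y) = 1 := by
          rw [List.countP_cons]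
          have h0 : L'.countP (fun e => tl e = y) = 0 := by
            rw [List.countP_eq_zero]
            intro e he
            have hlt := (List.pairwise_cons.mp hpw'.2).1 e he
            simp only [decide_eq_true_eq]
            intro hey
            rw [hey, ← htld'] at hlt
            exact absurd hlt (lt_irrefl _)
          simp [htld', h0]
        have h2 : (d' :: L').countP (fun e => hd e = y) = 0 := by
          rw [List.countP_eq_zero]
          intro e he
          simp only [decide_eq_true_eq]
          intro hey
          have htlow : ht (tl d') ≤ ht (tl e) := by
            rcases (List.mem_cons).mp he with h | h
            · rw [h]
            · exact le_of_lt ((List.pairwise_cons.mp hpw'.2).1 e h)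
          have hfin : ht y < ht y := by
            calc ht y = ht (tl d') := by rw [htld']
              _ ≤ ht (tl e) := htlow
              _ < ht (hd e) := hinc e (List.mem_cons_of_mem _ he)
              _ = ht y := by rw [hey]
          exact absurd hfin (lt_irrefl _)
        have hddy : hd d = y := hyd.symm
        simp [htl0, h1, h2, hddy]
      · have hne : ¬ (hd d = y) := fun h => hyd h.symm
        have := ih (by simp) hinc' hch'.2 hpw'.2 y (by
          intro h; rw [List.head_cons] at h
          exact hyd (by rw [h, hch'.1])) hy2
        simp [htl0, hne, this]

end Flow

section Flow2
set_option linter.unusedSectionVars false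

variable {ι : Type*} {X : Type*} [MetricSpace X]

lemma path_exists (D : Finset ι) (tl hd : ι → X) (cap : ι → ℕ) (ht : X → ℝ) (p : X) (r : ℝ)
    (h1 : ∀ d ∈ D, ht (tl d) < ht (hd d))
    (hcons : ∀ x : X, ht p < ht x → dist x p < r →
      (∑ d ∈ D.filter (fun d => hd d = x), cap d) ≤ ∑ d ∈ D.filter (fun d => tl d = x), cap d) :
    ∀ (k : ℕ) (x : X), (D.filter (fun d => ht x ≤ ht (tl d))).card ≤ k →
      ht p ≤ ht x →
      ∀ d₀ ∈ D, tl d₀ = x → 1 ≤ cap d₀ →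
      ∃ (L : List ι) (hne : L ≠ []), L.head hne = d₀ ∧
        L.Chain' (fun d d' => hd d = tl d') ∧
        (∀ d ∈ L, d ∈ D ∧ 1 ≤ cap d) ∧
        L.Pairwise (fun d d' => ht (tl d) < ht (tl d')) ∧
        (∀ d ∈ L, ht x ≤ ht (tl d)) ∧
        r ≤ dist (hd (L.getLast hne)) p := by
  intro k
  induction k with
  | zero =>
    intro x hcard hpx d₀ hd₀ htl₀ hcap₀
    exfalso
    have : d₀ ∈ D.filter (fun d => ht x ≤ ht (tl d)) := by
      simp only [Finset.mem_filter]
      exact ⟨hd₀, by rw [htl₀]⟩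
    have := Finset.card_pos.mpr ⟨d₀, this⟩
    omega
  | succ k ih =>
    intro x hcard hpx d₀ hd₀ htl₀ hcap₀
    set x' := hd d₀ with hx'
    have hxlt : ht x < ht x' := htl₀ ▸ h1 d₀ hd₀
    by_cases hsink : r ≤ dist x' p
    · exact ⟨[d₀], by simp, rfl, List.isChain_singleton _, by simp [hd₀, hcap₀], by simp,
        by simp [htl₀], by simpa using hsink⟩
    · push_neg at hsink
      have hdom : ht p < ht x' := lt_of_le_of_lt hpx hxlt
      -- conservation at x' gives an outgoing dart
      have hpos : 1 ≤ ∑ d ∈ D.filter (fun d => tl d = x'), cap d := by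
        refine le_trans ?_ (hcons x' hdom hsink)
        calc (1 : ℕ) ≤ cap d₀ := hcap₀
          _ ≤ ∑ d ∈ D.filter (fun d => hd d = x'), cap d :=
            Finset.single_le_sum (fun _ _ => Nat.zero_le _) (by simp [hd₀, hx'])
      obtain ⟨d₁, hd₁mem, hd₁cap⟩ : ∃ d₁, (d₁ ∈ D ∧ tl d₁ = x') ∧ 1 ≤ cap d₁ := by
        by_contra hno
        push_neg at hno
        have : ∑ d ∈ D.filter (fun d => tl d = x'), cap d = 0 := by
          refine Finset.sum_eq_zero fun d hd => ?_
          simp only [Finset.mem_filter] at hd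
          have := hno d hd
          omega
        omega
      -- decrease card
      have hsub : D.filter (fun d => ht x' ≤ ht (tl d)) ⊂ D.filter (fun d => ht x ≤ ht (tl d)) := by
        refine Finset.ssubset_iff_of_subset ?_ |>.mpr ⟨d₀, ?_, ?_⟩
        · intro d hd
          simp only [Finset.mem_filter] at hd ⊢
          exact ⟨hd.1, le_of_lt (lt_of_lt_of_le hxlt hd.2)⟩
        · simp only [Finset.mem_filter]; exact ⟨hd₀, by rw [htl₀]⟩
        · simp only [Finset.mem_filter, not_and, not_le, htl₀]
          intro _; exact hxlt
      have hcard' : (D.filter (fun d => ht x' ≤ ht (tl d))).card ≤ k := by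
        have := Finset.card_lt_card hsub
        omega
      obtain ⟨L, hne, hhead, hch, hmem, hpw, hlb, hlast⟩ :=
        ih x' hcard' (le_of_lt hdom) d₁ hd₁mem.1 hd₁mem.2 hd₁cap
      refine ⟨d₀ :: L, by simp, by simp, ?_, ?_, ?_, ?_, ?_⟩
      · rw [show List.Chain' _ (d₀ :: L) ↔ _ from List.isChain_cons]
        refine ⟨fun y hy => ?_, hch⟩
        have : L.head hne = y := by
          cases L with
          | nil => exact absurd rfl hne
          | cons a L'' =>
            simp only [List.head_cons]
            simpa using hy
        rw [← this, hhead, hd₁mem.2]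
      · intro d hd
        rcases List.mem_cons.mp hd with h | h
        · rw [h]; exact ⟨hd₀, hcap₀⟩
        · exact hmem d h
      · rw [List.pairwise_cons]
        refine ⟨fun d hd => ?_, hpw⟩
        rw [htl₀]
        exact lt_of_lt_of_le hxlt (hlb d hd)
      · intro d hd
        rcases List.mem_cons.mp hd with h | h
        · rw [h, htl₀]
        · exact le_of_lt (lt_of_lt_of_le hxlt (hlb d h))
      · have : (d₀ :: L).getLast (by simp) = L.getLast hne := List.getLast_cons hne
        rw [this]
        exact hlast

end Flow2

section Flow3
set_option linter.unusedSectionVars false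

variable {ι : Type*} {X : Type*} [MetricSpace X]

lemma sum_indicator_count (s : Finset ι) : ∀ (L : List ι), L.Nodup →
    (∑ d ∈ s, (if d ∈ L then 1 else 0 : ℕ)) = L.countP (fun d => decide (d ∈ s)) := by
  classical
  intro L
  induction L with
  | nil => simp
  | cons d L ih =>
    intro hnd
    have hdL : d ∉ L := (List.nodup_cons.mp hnd).1
    have hpt : ∀ x ∈ s, (if x ∈ d :: L then 1 else 0 : ℕ) =
        (if x = d then 1 else 0) + (if x ∈ L then 1 else 0) := by
      intro x _
      by_cases h1 : x = d
      · subst h1; simp [hdL]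
      · by_cases h2 : x ∈ L <;> simp [h1, h2, List.mem_cons]
    rw [Finset.sum_congr rfl hpt, Finset.sum_add_distrib, ih (List.nodup_cons.mp hnd).2,
      List.countP_cons]
    simp only [Finset.sum_ite_eq' s d (fun _ => (1:ℕ)), decide_eq_true_eq]
    by_cases hds : d ∈ s <;> simp [hds, Nat.add_comm]


lemma flow_bound (D : Finset ι) (tl hd : ι → X) (ht : X → ℝ) (p : X) (r : ℝ)
    (h1 : ∀ d ∈ D, ht (tl d) < ht (hd d)) :
    ∀ (a : ℕ) (cap : ι → ℕ),
      (∀ x : X, ht p < ht x → dist x p < r →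
        (∑ d ∈ D.filter (fun d => hd d = x), cap d) ≤ ∑ d ∈ D.filter (fun d => tl d = x), cap d) →
      ∀ d₀ ∈ D, tl d₀ = p → a ≤ cap d₀ →
      (a : ℝ≥0∞) * ENNReal.ofReal r ≤ ∑ d ∈ D, (cap d : ℝ≥0∞) * edist (tl d) (hd d) := by
  intro a
  induction a with
  | zero => intro cap _ d₀ _ _ _; simp
  | succ a ih =>
    intro cap hcons d₀ hd₀ htl₀ hcap₀
    obtain ⟨L, hne, hhead, hch, hmem, hpw, hlb, hlast⟩ :=
      path_exists D tl hd cap ht p r h1 hcons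
        (D.filter (fun d => ht p ≤ ht (tl d))).card p (le_refl _) (le_refl _)
        d₀ hd₀ htl₀ (by omega)
    have hnd : L.Nodup := hpw.imp (fun {x y} h => fun heq => absurd (heq ▸ h) (lt_irrefl _))
    have hd₀L : d₀ ∈ L := hhead ▸ L.head_mem hne
    have hLD : ∀ d ∈ L, d ∈ D := fun d hd => (hmem d hd).1
    have hLcap : ∀ d ∈ L, 1 ≤ cap d := fun d hd => (hmem d hd).2
    set cap' : ι → ℕ := fun d => if d ∈ L then cap d - 1 else cap d with hcap'
    have hpoint : ∀ d, d ∈ D → cap d = cap' d + (if d ∈ L then 1 else 0) := by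
      intro d _
      by_cases h : d ∈ L
      · have := hLcap d h
        simp only [hcap', if_pos h]
        omega
      · simp [hcap', h]
    -- sums over filters decompose
    have hsum : ∀ (P : ι → Prop), (∑ d ∈ D.filter (fun d => P d), cap d)
        = (∑ d ∈ D.filter (fun d => P d), cap' d) + L.countP (fun d => decide (P d)) := by
      intro P
      rw [Finset.sum_congr rfl (fun d hd => hpoint d (Finset.mem_filter.mp hd).1),
        Finset.sum_add_distrib, sum_indicator_count _ L hnd]
      congr 1
      refine List.countP_congr ?_
      intro d hd
      simp only [decide_eq_true_eq, Finset.mem_filter]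
      constructor
      · intro h; exact h.2
      · intro h; exact ⟨hLD d hd, h⟩
    have hcons' : ∀ x : X, ht p < ht x → dist x p < r →
        (∑ d ∈ D.filter (fun d => hd d = x), cap' d) ≤
          ∑ d ∈ D.filter (fun d => tl d = x), cap' d := by
      intro x hx1 hx2
      have hA := hsum (fun d => hd d = x)
      have hB := hsum (fun d => tl d = x)
      have hcount : L.countP (fun d => decide (tl d = x)) = L.countP (fun d => decide (hd d = x)) := by
        refine chain_count tl hd ht L hne (fun d hd => h1 d (hLD d hd)) hch hpw x ?_ ?_
        · rw [hhead, htl₀]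
          intro h
          rw [h] at hx1
          exact absurd hx1 (lt_irrefl _)
        · intro h
          rw [h] at hx2
          exact absurd hlast (not_le.mpr hx2)
      have := hcons x hx1 hx2
      omega
    have hcap₀' : a ≤ cap' d₀ := by
      have := hLcap d₀ hd₀L
      simp only [hcap', if_pos hd₀L]
      omega
    have hIH := ih cap' hcons' d₀ hd₀ htl₀ hcap₀'
    -- path length
    have hplen : ENNReal.ofReal r ≤ (L.map (fun d => edist (tl d) (hd d))).sum := by
      refine le_trans ?_ (chain_edist_le tl hd L hne hch)
      rw [hhead, htl₀, edist_comm, edist_dist]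
      exact ENNReal.ofReal_le_ofReal hlast
    have hsplit : (∑ d ∈ D, (cap d : ℝ≥0∞) * edist (tl d) (hd d))
        = (∑ d ∈ D, (cap' d : ℝ≥0∞) * edist (tl d) (hd d))
          + (L.map (fun d => edist (tl d) (hd d))).sum := by
      have : ∀ d ∈ D, (cap d : ℝ≥0∞) * edist (tl d) (hd d)
          = (cap' d : ℝ≥0∞) * edist (tl d) (hd d)
            + (if d ∈ L then edist (tl d) (hd d) else 0) := by
        intro d hd
        rw [hpoint d hd]
        push_cast
        by_cases h : d ∈ L <;> simp [h, add_mul]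
      rw [Finset.sum_congr rfl this, Finset.sum_add_distrib]
      congr 1
      have hfe : D.filter (fun d => d ∈ L) = L.toFinset := by
        ext d
        simp only [Finset.mem_filter, List.mem_toFinset]
        exact ⟨fun h => h.2, fun h => ⟨hLD d h, h⟩⟩
      rw [← Finset.sum_filter, hfe, List.sum_toFinset _ hnd]
    calc ((a + 1 : ℕ) : ℝ≥0∞) * ENNReal.ofReal r
        = (a : ℝ≥0∞) * ENNReal.ofReal r + ENNReal.ofReal r := by
          push_cast; ring
      _ ≤ (∑ d ∈ D, (cap' d : ℝ≥0∞) * edist (tl d) (hd d))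
            + (L.map (fun d => edist (tl d) (hd d))).sum := add_le_add hIH hplen
      _ = ∑ d ∈ D, (cap d : ℝ≥0∞) * edist (tl d) (hd d) := hsplit.symm

end Flow3



section Geo
variable {n : ℕ}

lemma intVec_ne_zero {n : ℕ} {w : Fin n → ℤ} (hw : w ≠ 0) : intVec w ≠ 0 := by
  intro h
  apply hw
  funext i
  have : intVec w i = 0 := by rw [h]; rfl
  simpa [intVec] using this

lemma abs_coord_le_norm (x : Euc n) (i : Fin n) : |x i| ≤ ‖x‖ := by
  rw [EuclideanSpace.norm_eq]
  rw [← Real.sqrt_sq_eq_abs]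
  apply Real.sqrt_le_sqrt
  calc x i ^ 2 = ‖x i‖ ^ 2 := by rw [Real.norm_eq_abs, sq_abs]
    _ ≤ ∑ j, ‖x j‖ ^ 2 := Finset.single_le_sum (f := fun j => ‖x j‖ ^ 2)
        (fun j _ => sq_nonneg _) (Finset.mem_univ i)

lemma natAbs_coord_le_nnnorm (f : TropEdge n) (i : Fin n) :
    (((f.weight i).natAbs : ℕ) : ℝ≥0∞) ≤ (‖f.wR‖₊ : ℝ≥0∞) := by
  have hreal : (((f.weight i).natAbs : ℕ) : ℝ) ≤ ‖f.wR‖ := by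
    have h1 : (((f.weight i).natAbs : ℕ) : ℝ) = |((f.weight i : ℤ) : ℝ)| := by
      rw [Nat.cast_natAbs, Int.cast_abs]
    have h2 : f.wR i = ((f.weight i : ℤ) : ℝ) := rfl
    rw [h1, ← h2]
    exact abs_coord_le_norm f.wR i
  have : (((f.weight i).natAbs : ℕ) : ℝ≥0) ≤ ‖f.wR‖₊ := by
    rw [← NNReal.coe_le_coe]
    simpa using hreal
  exact_mod_cast ENNReal.coe_le_coe.mpr this

lemma edist_le_hausdorff {x y : Euc n} {s : Set (Euc n)}
    (h : segment ℝ x y \ {y} ⊆ s) : edist x y ≤ μH[1] s := by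
  have h1 : μH[1] ({y} : Set (Euc n)) = 0 := by
    have := hausdorffMeasure_segment (E := Euc n) y y
    rw [segment_same] at this
    rw [this, edist_self]
  calc edist x y = μH[1] (segment ℝ x y) := (hausdorffMeasure_segment x y).symm
    _ = μH[1] (segment ℝ x y \ {y}) := (measure_diff_null h1).symm
    _ ≤ μH[1] s := measure_mono h

lemma seg_head (p x y : Euc n) {r : ℝ} (hx : dist x p < r) :
    ∃ (h : Euc n) (s : ℝ), 0 < s ∧ s ≤ 1 ∧ h = x + s • (y - x) ∧ dist h p ≤ r ∧
      (dist h p < r → h = y) := by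
  by_cases hy : dist y p ≤ r
  · exact ⟨y, 1, one_pos, le_refl _, by simp, hy, fun _ => rfl⟩
  · push_neg at hy
    set g : ℝ → ℝ := fun s => dist (x + s • (y - x)) p with hg
    have hgc : Continuous g := by
      apply Continuous.dist _ continuous_const
      exact continuous_const.add (continuous_id.smul continuous_const)
    have h0 : g 0 = dist x p := by simp [hg]
    have h1 : g 1 = dist y p := by simp [hg]
    have : r ∈ Icc (g 0) (g 1) := by
      rw [h0, h1]; exact ⟨le_of_lt hx, le_of_lt hy⟩
    obtain ⟨s, hs, hgs⟩ := intermediate_value_Icc (by norm_num : (0:ℝ) ≤ 1)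
      (hgc.continuousOn) this
    refine ⟨x + s • (y - x), s, ?_, hs.2, rfl, le_of_eq hgs, fun hlt => absurd (hgs ▸ hlt) (lt_irrefl _)⟩
    rcases lt_or_eq_of_le hs.1 with h | h
    · exact h
    · exfalso
      rw [← h] at hgs
      rw [h0] at hgs
      rw [hgs] at hx
      exact absurd hx (lt_irrefl _)

lemma smul_solve {t s : ℝ} (ht : 0 < t) {m : ℕ} {w u : Euc m} (h : t • w = s • u) :
    w = (s / t) • u := by
  have : w = t⁻¹ • (s • u) := by
    rw [← h, smul_smul, inv_mul_cancel₀ ht.ne', one_smul]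
  rw [this, smul_smul]
  congr 1
  field_simp

lemma internal_dir {a b x w : Euc n} (hw : w ≠ 0) (hxa : x = a ∨ x = b)
    {t : ℝ} (ht : 0 < t) (hmem : x + t • w ∈ segment ℝ a b) :
    ∃ μ : ℝ, 0 < μ ∧ w = μ • ((if x = a then b else a) - x) := by
  by_cases hxa' : x = a
  · subst hxa'
    rw [segment_eq_image'] at hmem
    obtain ⟨s, hs, heq⟩ := hmem
    have heq' : t • w = s • (b - x) := add_left_cancel heq.symm
    have hs0 : s ≠ 0 := by
      intro h
      rw [h, zero_smul] at heq'
      exact hw (by simpa [smul_eq_zero, ne_of_gt ht] using heq')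
    refine ⟨s / t, div_pos (lt_of_le_of_ne hs.1 (Ne.symm hs0)) ht, ?_⟩
    rw [if_pos rfl]
    exact smul_solve ht heq'
  · have hxb : x = b := hxa.resolve_left hxa'
    subst hxb
    rw [segment_eq_image'] at hmem
    obtain ⟨s, hs, heq⟩ := hmem
    have heq2 : x + t • w = a + s • (x - a) := heq.symm
    have heq' : t • w = (1 - s) • (a - x) := by
      have h3 : t • w = (a + s • (x - a)) - x := by
        rw [← heq2]; abel
      rw [h3]
      module
    have hs1 : (1 : ℝ) - s ≠ 0 := by
      intro h
      rw [h, zero_smul] at heq'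
      exact hw (by simpa [smul_eq_zero, ne_of_gt ht] using heq')
    refine ⟨(1 - s) / t, div_pos (lt_of_le_of_ne (by linarith [hs.2]) (Ne.symm hs1)) ht, ?_⟩
    rw [if_neg hxa']
    exact smul_solve ht heq'

lemma ray_dir {v x w u : Euc n} (hw : w ≠ 0) {T : ℝ≥0∞}
    {t : ℝ} (ht : 0 < t) (hmem : x + t • w ∈ rayTo v u T) (hxv : x = v) :
    ∃ μ : ℝ, 0 < μ ∧ w = μ • u := by
  subst hxv
  obtain ⟨s, hs0, _, heq⟩ := hmem
  have heq' : t • w = s • u := add_left_cancel heq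
  have hs : s ≠ 0 := by
    intro h
    rw [h, zero_smul] at heq'
    exact hw (by simpa [smul_eq_zero, ne_of_gt ht] using heq')
  exact ⟨s / t, div_pos (lt_of_le_of_ne hs0 (Ne.symm hs)) ht, smul_solve ht heq'⟩

lemma ray_head {U : Set (Euc n)} (p v u : Euc n) {r : ℝ} (hr : 0 < r) (hu : u ≠ 0)
    (hv : dist v p < r) (T : ℝ≥0∞) (hU : Metric.closedBall p r ⊆ U)
    (hcl : ¬ closure (rayTo v u T ∩ U) ⊆ U) :
    ∃ s : ℝ, 0 < s ∧ dist (v + s • u) p = r ∧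
      ∀ t, 0 ≤ t → t < s → v + t • u ∈ rayTo v u T ∩ U ∧ dist (v + t • u) p < r := by
  have hun : 0 < ‖u‖ := norm_pos_iff.mpr hu
  set g : ℝ → ℝ := fun s => dist (v + s • u) p with hg
  have hgc : Continuous g :=
    Continuous.dist (continuous_const.add (continuous_id.smul continuous_const)) continuous_const
  have h0 : g 0 = dist v p := by simp [hg]
  set t₁ : ℝ := (r + dist v p + 1) / ‖u‖ with ht₁
  have ht₁pos : 0 < t₁ := div_pos (by positivity) hun
  have hgt₁ : r ≤ g t₁ := by
    have h2 : ‖t₁ • u‖ - ‖v - p‖ ≤ ‖t₁ • u - (v - p)‖ := norm_sub_norm_le _ _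
    have h3 : ‖t₁ • u‖ = r + dist v p + 1 := by
      rw [norm_smul, Real.norm_eq_abs, abs_of_pos ht₁pos, ht₁, div_mul_cancel₀ _ hun.ne']
    have h4 : g t₁ = ‖t₁ • u - (p - v)‖ := by
      rw [hg]
      simp only [dist_eq_norm]
      congr 1
      abel
    have h5 : ‖t₁ • u‖ - ‖p - v‖ ≤ ‖t₁ • u - (p - v)‖ := norm_sub_norm_le _ _
    rw [h4]
    have : ‖p - v‖ = dist v p := by rw [dist_eq_norm, norm_sub_rev]
    linarith [h5, h3.le, h3.ge]
  -- first crossing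
  set K : Set ℝ := {t | t ∈ Icc 0 t₁ ∧ g t = r} with hK
  have hKne : K.Nonempty := by
    obtain ⟨t, ht, hgt⟩ := intermediate_value_Icc ht₁pos.le hgc.continuousOn
      (by rw [h0]; exact ⟨hv.le, hgt₁⟩)
    exact ⟨t, ht, hgt⟩
  have hKcl : IsClosed K := by
    have : K = Icc 0 t₁ ∩ g ⁻¹' {r} := by
      ext t
      simp only [hK, Set.mem_setOf_eq, Set.mem_inter_iff, Set.mem_preimage, Set.mem_singleton_iff]
    rw [this]
    exact isClosed_Icc.inter (isClosed_singleton.preimage hgc)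
  have hKbdd : BddBelow K := ⟨0, fun t ht => ht.1.1⟩
  set s := sInf K with hs
  have hsK : s ∈ K := hKcl.csInf_mem hKne hKbdd
  have hs0 : 0 ≤ s := hsK.1.1
  have hgs : g s = r := hsK.2
  have hspos : 0 < s := by
    rcases lt_or_eq_of_le hs0 with h | h
    · exact h
    · exfalso
      rw [← h, h0] at hgs
      rw [hgs] at hv
      exact absurd hv (lt_irrefl _)
  have hlt : ∀ t, 0 ≤ t → t < s → g t < r := by
    intro t h0t hts
    by_contra hge
    push_neg at hge
    obtain ⟨t', ht', hgt'⟩ := intermediate_value_Icc h0t (hgc.continuousOn)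
      (by rw [h0]; exact ⟨hv.le, hge⟩)
    have ht'K : t' ∈ K := by
      refine ⟨⟨ht'.1, ?_⟩, hgt'⟩
      calc t' ≤ t := ht'.2
        _ ≤ t₁ := le_of_lt (lt_of_lt_of_le hts hsK.1.2)
    have := csInf_le hKbdd ht'K
    have : s ≤ t := le_trans this ht'.2
    exact absurd hts (not_lt.mpr this)
  refine ⟨s, hspos, hgs, ?_⟩
  intro t h0t hts
  have hgtr : g t < r := hlt t h0t hts
  have hT : ENNReal.ofReal t < T := by
    by_contra hTle
    push_neg at hTle
    apply hcl
    have hsub : rayTo v u T ∩ U ⊆ Metric.ball p r := by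
      rintro z ⟨⟨t', h0t', hT', hz⟩, _⟩
      have ht't : t' < t := by
        by_contra hge
        push_neg at hge
        exact absurd (lt_of_lt_of_le hT' (le_trans hTle (ENNReal.ofReal_le_ofReal hge)))
          (lt_irrefl _)
      have : g t' < r := hlt t' h0t' (lt_trans ht't hts)
      rw [hz]
      exact this
    calc closure (rayTo v u T ∩ U) ⊆ closure (Metric.ball p r) := closure_mono hsub
      _ = Metric.closedBall p r := closure_ball p hr.ne'
      _ ⊆ U := hU
  refine ⟨⟨⟨t, h0t, hT, rfl⟩, hU (Metric.mem_closedBall.mpr hgtr.le)⟩, hgtr⟩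

lemma coord_add_smul (x y : Euc n) (s : ℝ) (i : Fin n) : (x + s • y) i = x i + s * y i := rfl

lemma coord_sub (x y : Euc n) (i : Fin n) : (x - y) i = x i - y i := rfl

lemma coord_smul (s : ℝ) (y : Euc n) (i : Fin n) : (s • y) i = s * y i := rfl

/-- The specification of a dart associated to an edge. -/
def DSpec {n : ℕ} (i : Fin n) (σ : ℝ) (p : Euc n) (r : ℝ) (verts : Finset (Euc n))
    (f : TropEdge n) (t h : Euc n) : Prop :=
  σ * t i < σ * h i ∧ dist t p < r ∧ dist h p ≤ r ∧ edist t h ≤ μH[1] f.carrier ∧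
  t ∈ f.ends ∧ (∀ y ∈ f.ends, σ * t i ≤ σ * y i) ∧
  (dist h p < r → h ∈ f.ends ∧ h ∈ verts)

lemma dart_out {n : ℕ} {U : Set (Euc n)} (G : TropicalCurve n U) {i : Fin n} {σ : ℝ}
    {p : Euc n} {r : ℝ} (hr : 0 < r)
    (hU : Metric.closedBall p r ⊆ U)
    {f : TropEdge n} (hf : f ∈ G.edges) {x : Euc n} (hx : x ∈ f.ends)
    (hxr : dist x p < r) {ε : ℤ}
    (hsm : ∃ θ : ℝ, 0 < θ ∧ ∀ t : ℝ, 0 < t → t < θ → x + (t * (ε:ℝ)) • f.wR ∈ f.carrier)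
    (hpos : 0 < σ * ((ε : ℝ) * ((f.weight i : ℤ) : ℝ))) :
    (∃ h, DSpec i σ p r G.verts f x h) ∧
      (∀ t' h', DSpec i σ p r G.verts f t' h' → t' = x) := by
  obtain ⟨θ, hθ, hsm⟩ := hsm
  set w : Euc n := (ε : ℝ) • f.wR with hwdef
  have hwi : w i = (ε : ℝ) * ((f.weight i : ℤ) : ℝ) := rfl
  have hε0 : (ε : ℝ) ≠ 0 := by
    intro h
    rw [h] at hpos
    simp at hpos
  have hw : w ≠ 0 := smul_ne_zero hε0 (intVec_ne_zero (G.weight_ne f hf))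
  have hθ2 : 0 < θ/2 := by linarith
  have hmemc : x + (θ/2) • w ∈ f.carrier := by
    have := hsm (θ/2) (by linarith) (by linarith)
    rw [hwdef, smul_smul]
    exact this
  rcases G.edge_shape f hf with ⟨a, ha, b, hb, hab, hends, hcar, hsub, c, hc, hba⟩ |
    ⟨v, hv, u, hu, T, hT, hends, hcar, hcl, c, hc, hcu⟩
  · -- internal edge
    have hxab : x = a ∨ x = b := by
      rw [hends] at hx
      simpa using hx
    rw [hcar] at hmemc
    obtain ⟨μ, hμ, hwμ⟩ := internal_dir hw hxab hθ2 hmemc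
    set b' : Euc n := if x = a then b else a with hb'
    have hb'v : b' ∈ G.verts := by
      by_cases h : x = a <;> simp [hb', h, ha, hb]
    have hb'e : b' ∈ f.ends := by
      rw [hends]
      by_cases h : x = a <;> simp [hb', h]
    have hcases : ∀ y, y ∈ f.ends → y = x ∨ y = b' := by
      intro y hy
      rw [hends] at hy
      rcases (by simpa using hy : y = a ∨ y = b) with h' | h'
      · by_cases hxa : x = a
        · exact Or.inl (by rw [h', hxa])
        · exact Or.inr (by rw [h', hb', if_neg hxa])
      · by_cases hxa : x = a
        · exact Or.inr (by rw [h', hb', if_pos hxa])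
        · exact Or.inl (by rw [h', (hxab.resolve_left hxa)])
    have hdir : 0 < σ * (b' i - x i) := by
      have h1 : σ * w i = μ * (σ * (b' i - x i)) := by
        rw [hwμ, coord_smul, coord_sub]; ring
      rw [hwi] at h1
      nlinarith [hpos, hμ]
    obtain ⟨h, sh, hsh0, hsh1, hheq, hhr, hhcl⟩ := seg_head p x b' hxr
    have hhi : σ * x i < σ * h i := by
      have : h i = x i + sh * (b' i - x i) := by rw [hheq, coord_add_smul, coord_sub]
      rw [this]
      nlinarith
    have hxseg : x ∈ segment ℝ a b := by
      rcases hxab with h' | h' <;> rw [h']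
      · exact left_mem_segment ℝ a b
      · exact right_mem_segment ℝ a b
    have hb'seg : b' ∈ segment ℝ a b := by
      by_cases h' : x = a
      · simp only [hb', if_pos h']; exact right_mem_segment ℝ a b
      · simp only [hb', if_neg h']; exact left_mem_segment ℝ a b
    have hhseg : h ∈ segment ℝ a b := by
      have : h ∈ segment ℝ x b' := by
        rw [segment_eq_image']
        exact ⟨sh, ⟨hsh0.le, hsh1⟩, hheq.symm⟩
      exact (convex_segment a b).segment_subset hxseg hb'seg this
    have hmeas : edist x h ≤ μH[1] f.carrier := by
      apply edist_le_hausdorff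
      rw [hcar]
      intro z hz
      exact (convex_segment a b).segment_subset hxseg hhseg hz.1
    constructor
    · refine ⟨h, hhi, hxr, hhr, hmeas, hx, ?_, ?_⟩
      · intro y hy
        rcases hcases y hy with h' | h'
        · rw [h']
        · rw [h']
          have : σ * b' i - σ * x i = σ * (b' i - x i) := by ring
          linarith
      · intro hlt
        rw [hhcl hlt]
        exact ⟨hb'e, hb'v⟩
    · intro t' h' hspec
      obtain ⟨_, _, _, _, ht'e, hmin, _⟩ := hspec
      rcases hcases t' ht'e with h1 | h1
      · exact h1
      · exfalso
        have := hmin x hx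
        rw [h1] at this
        have h2 : σ * b' i - σ * x i = σ * (b' i - x i) := by ring
        linarith
  · -- unbounded edge
    have hxv : x = v := by
      rw [hends] at hx
      simpa using hx
    rw [hcar] at hmemc
    obtain ⟨μ, hμ, hwμ⟩ := ray_dir hw hθ2 hmemc.1 hxv
    have hui : 0 < σ * u i := by
      have h1 : σ * w i = μ * (σ * u i) := by rw [hwμ, coord_smul]; ring
      rw [hwi] at h1
      nlinarith [hpos, hμ]
    obtain ⟨sh, hsh, hdisth, hbefore⟩ := ray_head p v u hr hu (hxv ▸ hxr) T hU hcl
    set h : Euc n := v + sh • u with hh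
    have hhi : σ * x i < σ * h i := by
      have : h i = v i + sh * u i := by rw [hh, coord_add_smul]
      rw [this, hxv]
      nlinarith
    have hmeas : edist x h ≤ μH[1] f.carrier := by
      apply edist_le_hausdorff
      rw [hcar, hxv]
      intro z hz
      obtain ⟨hz1, hz2⟩ := hz
      rw [segment_eq_image'] at hz1
      obtain ⟨τ, hτ, hzeq⟩ := hz1
      have hzz : z = v + (τ * sh) • u := by
        rw [← hzeq, hh]
        simp only [add_sub_cancel_left]
        rw [smul_smul]
      by_cases hτ1 : τ = 1
      · exfalso
        apply hz2
        rw [hzz, hτ1, one_mul, ← hh]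
        rfl
      · have hτlt : τ < 1 := lt_of_le_of_ne hτ.2 hτ1
        have := hbefore (τ * sh) (mul_nonneg hτ.1 hsh.le)
          (by nlinarith [hsh])
        rw [hzz]
        exact this.1
    refine ⟨⟨h, hhi, hxr, le_of_eq hdisth, hmeas, hx, ?_, ?_⟩, ?_⟩
    · intro y hy
      rw [hends] at hy
      have : y = v := by simpa using hy
      rw [this, hxv]
    · intro hlt
      rw [hdisth] at hlt
      exact absurd hlt (lt_irrefl _)
    · intro t' h' hspec
      have := hspec.2.2.2.2.1
      rw [hends] at this
      rw [hxv]
      simpa using this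

lemma dart_in {n : ℕ} {U : Set (Euc n)} (G : TropicalCurve n U) {i : Fin n} {σ : ℝ}
    {p : Euc n} {r : ℝ}
    {f : TropEdge n} (hf : f ∈ G.edges) {t x : Euc n}
    (hspec : DSpec i σ p r G.verts f t x) (hxr : dist x p < r) {ε : ℤ}
    (hε : ε = 1 ∨ ε = -1)
    (hsm : ∃ θ : ℝ, 0 < θ ∧ ∀ s : ℝ, 0 < s → s < θ → x + (s * (ε:ℝ)) • f.wR ∈ f.carrier) :
    σ * ((ε : ℝ) * ((f.weight i : ℤ) : ℝ)) < 0 := by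
  obtain ⟨hti, htr, hhr, hmeas, hte, hmin, hclass⟩ := hspec
  obtain ⟨hxe, hxv⟩ := hclass hxr
  obtain ⟨θ, hθ, hsm⟩ := hsm
  set w : Euc n := (ε : ℝ) • f.wR with hwdef
  have hwi : w i = (ε : ℝ) * ((f.weight i : ℤ) : ℝ) := rfl
  have hε0 : (ε : ℝ) ≠ 0 := by
    rcases hε with h | h <;> rw [h] <;> norm_num
  have hw : w ≠ 0 := smul_ne_zero hε0 (intVec_ne_zero (G.weight_ne f hf))
  have hθ2 : 0 < θ/2 := by linarith
  have hmemc : x + (θ/2) • w ∈ f.carrier := by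
    have := hsm (θ/2) (by linarith) (by linarith)
    rw [hwdef, smul_smul]
    exact this
  have htx : t ≠ x := by
    intro h
    rw [h] at hti
    exact absurd hti (lt_irrefl _)
  rcases G.edge_shape f hf with ⟨a, ha, b, hb, hab, hends, hcar, hsub, c, hc, hba⟩ |
    ⟨v, hv, u, hu, T, hT, hends, hcar, hcl, c, hc, hcu⟩
  · have hxab : x = a ∨ x = b := by
      rw [hends] at hxe
      simpa using hxe
    rw [hcar] at hmemc
    obtain ⟨μ, hμ, hwμ⟩ := internal_dir hw hxab hθ2 hmemc
    set b' : Euc n := if x = a then b else a with hb'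
    have htb' : t = b' := by
      rw [hends] at hte
      rcases (by simpa using hte : t = a ∨ t = b) with h' | h'
      · by_cases hxa : x = a
        · exact absurd (h'.trans hxa.symm) htx
        · rw [h', hb', if_neg hxa]
      · by_cases hxa : x = a
        · rw [h', hb', if_pos hxa]
        · exact absurd (h'.trans (hxab.resolve_left hxa).symm) htx
    have h1 : σ * w i = μ * (σ * (t i - x i)) := by
      rw [hwμ, ← htb', coord_smul, coord_sub]; ring
    rw [hwi] at h1
    nlinarith [hti, hμ]
  · -- unbounded: impossible since t ≠ x but both in singleton ends
    exfalso
    rw [hends] at hte hxe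
    exact htx ((by simpa using hte : t = v).trans (by simpa using hxe : x = v).symm)

set_option maxHeartbeats 1000000 in
lemma dart_zero {n : ℕ} {U : Set (Euc n)} (G : TropicalCurve n U) {e : TropEdge n}
    (he : e ∈ G.edges) {p : Euc n} (hp : p ∈ e.carrier) (hp' : p ∉ e.ends)
    {i : Fin n} (hwi : ((e.weight i : ℤ) : ℝ) ≠ 0)
    {r : ℝ} (hr : 0 < r) (hU : Metric.closedBall p r ⊆ U) :
    ∃ σ : ℝ, (σ = 1 ∨ σ = -1) ∧ ∃ h₀ : Euc n,
      σ * p i < σ * h₀ i ∧ dist h₀ p ≤ r ∧ edist p h₀ ≤ μH[1] e.carrier ∧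
      (dist h₀ p < r → h₀ ∈ e.ends ∧ h₀ ∈ G.verts) ∧
      (∀ x ∈ e.ends, σ * p i < σ * x i → ∀ ε : ℤ, (ε = 1 ∨ ε = -1) →
        (∃ θ : ℝ, 0 < θ ∧ ∀ s : ℝ, 0 < s → s < θ → x + (s * (ε:ℝ)) • e.wR ∈ e.carrier) →
        σ * ((ε:ℝ) * ((e.weight i : ℤ) : ℝ)) < 0) := by
  have hwRi : e.wR i = ((e.weight i : ℤ) : ℝ) := rfl
  have hwR0 : e.wR ≠ 0 := intVec_ne_zero (G.weight_ne e he)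
  rcases G.edge_shape e he with ⟨a, ha, b, hb, hab, hends, hcar, hsub, c, hc, hba⟩ |
    ⟨v, hv, u, hu, T, hT, hends, hcar, hcl, c, hc, hcu⟩
  · -- internal edge
    have hpab : p ∈ segment ℝ a b := by rw [← hcar]; exact hp
    rw [segment_eq_image'] at hpab
    obtain ⟨s₀, hs₀, hpeq⟩ := hpab
    have hpa : p ≠ a := by
      intro h; apply hp'; rw [hends, h]; simp
    have hpb : p ≠ b := by
      intro h; apply hp'; rw [hends, h]; simp
    have hs₀0 : 0 < s₀ := by
      rcases lt_or_eq_of_le hs₀.1 with h | h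
      · exact h
      · exfalso; apply hpa; rw [← hpeq, ← h]; simp
    have hs₀1 : s₀ < 1 := by
      rcases lt_or_eq_of_le hs₀.2 with h | h
      · exact h
      · exfalso; apply hpb; rw [← hpeq, h]
        simp only [one_smul]
        abel
    have hd0 : (b - a) i ≠ 0 := by
      rw [hba, coord_smul, hwRi]
      exact mul_ne_zero hc hwi
    set σ : ℝ := if 0 < (b - a) i then 1 else -1 with hσdef
    have hσ : σ = 1 ∨ σ = -1 := by
      by_cases h : 0 < (b - a) i
      · exact Or.inl (by rw [hσdef, if_pos h])
      · exact Or.inr (by rw [hσdef, if_neg h])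
    have hσd : 0 < σ * (b - a) i := by
      by_cases h : 0 < (b - a) i
      · rw [hσdef, if_pos h]; linarith
      · rw [hσdef, if_neg h]
        rcases lt_or_eq_of_le (not_lt.mp h) with h' | h'
        · nlinarith
        · exact (hd0 h').elim
    have hpeq' : a + s₀ • (b - a) = p := hpeq
    have hpcoord : p i = a i + s₀ * (b - a) i := by
      rw [← hpeq', coord_add_smul]
    have hbp : (b - p) i = (1 - s₀) * (b - a) i := by
      rw [coord_sub, hpcoord, coord_sub]; ring
    have hap : (p - a) i = s₀ * (b - a) i := by
      rw [coord_sub, hpcoord, coord_sub]; ring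
    obtain ⟨h₀, sh, hsh0, hsh1, hheq, hhr, hhcl⟩ := seg_head p p b (by simpa using hr)
    have hpseg : p ∈ segment ℝ a b := by rw [← hcar]; exact hp
    refine ⟨σ, hσ, h₀, ?_, hhr, ?_, ?_, ?_⟩
    · have h1 : h₀ i = p i + sh * ((b - p) i) := by rw [hheq, coord_add_smul]
      have key : σ * h₀ i - σ * p i = sh * ((1 - s₀) * (σ * (b - a) i)) := by
        rw [h1, hbp]; ring
      nlinarith [mul_pos hsh0 (mul_pos (by linarith : (0:ℝ) < 1 - s₀) hσd), key]
    · apply edist_le_hausdorff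
      rw [hcar]
      intro z hz
      have hh₀seg : h₀ ∈ segment ℝ a b := by
        have : h₀ ∈ segment ℝ p b := by
          rw [segment_eq_image']
          exact ⟨sh, ⟨hsh0.le, hsh1⟩, hheq.symm⟩
        exact (convex_segment a b).segment_subset hpseg (right_mem_segment ℝ a b) this
      exact (convex_segment a b).segment_subset hpseg hh₀seg hz.1
    · intro hlt
      rw [hhcl hlt, hends]
      exact ⟨by simp, hb⟩
    · intro x hxe hxgt ε hε hsm
      have hxb : x = b := by
        rw [hends] at hxe
        rcases (by simpa using hxe : x = a ∨ x = b) with h' | h'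
        · exfalso
          rw [h'] at hxgt
          have h4 : (p - a) i = p i - a i := coord_sub _ _ _
          have h5 := hap
          rw [h4] at h5
          have key : σ * p i - σ * a i = s₀ * (σ * (b - a) i) := by
            linear_combination σ * h5
          nlinarith [mul_pos hs₀0 hσd, key, hxgt]
        · exact h'
      obtain ⟨θ, hθ, hsm⟩ := hsm
      set w : Euc n := (ε : ℝ) • e.wR with hwdef
      have hε0 : (ε : ℝ) ≠ 0 := by rcases hε with h | h <;> rw [h] <;> norm_num
      have hw : w ≠ 0 := smul_ne_zero hε0 hwR0
      have hθ2 : 0 < θ/2 := by linarith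
      have hmemc : x + (θ/2) • w ∈ segment ℝ a b := by
        have := hsm (θ/2) (by linarith) (by linarith)
        rw [← hcar, hwdef, smul_smul]
        exact this
      obtain ⟨μ, hμ, hwμ⟩ := internal_dir hw (Or.inr hxb) hθ2 hmemc
      have hxa : ¬ (x = a) := by rw [hxb]; exact fun h => hab h.symm
      rw [if_neg hxa] at hwμ
      have h1 : σ * w i = μ * (σ * (a - x) i) := by
        rw [hwμ, coord_smul]; ring
      have h2 : σ * (a - x) i = - (σ * (b - a) i) := by
        rw [hxb, coord_sub, coord_sub]; ring
      have h3 : σ * w i = (ε : ℝ) * (σ * ((e.weight i : ℤ) : ℝ)) := by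
        rw [hwdef, coord_smul, hwRi]; ring
      have key : (ε : ℝ) * (σ * ((e.weight i : ℤ) : ℝ)) = - (μ * (σ * (b - a) i)) := by
        rw [← h3, h1, h2]; ring
      have key2 : σ * ((ε : ℝ) * ((e.weight i : ℤ) : ℝ))
          = (ε : ℝ) * (σ * ((e.weight i : ℤ) : ℝ)) := by ring
      rw [key2, key]
      linarith [mul_pos hμ hσd]
  · -- unbounded edge
    have hpray : p ∈ rayTo v u T := by
      rw [hcar] at hp; exact hp.1
    obtain ⟨t₀, ht₀0, ht₀T, hpeq⟩ := hpray
    have hpv : p ≠ v := by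
      intro h; apply hp'; rw [hends, h]; simp
    have ht₀pos : 0 < t₀ := by
      rcases lt_or_eq_of_le ht₀0 with h | h
      · exact h
      · exfalso; apply hpv; rw [hpeq, ← h]; simp
    have hui : u i ≠ 0 := by
      have : u i = c * ((e.weight i : ℤ) : ℝ) := by rw [hcu, coord_smul, hwRi]
      rw [this]
      exact mul_ne_zero hc hwi
    set σ : ℝ := if 0 < u i then -1 else 1 with hσdef
    have hσ : σ = 1 ∨ σ = -1 := by
      by_cases h : 0 < u i
      · exact Or.inr (by rw [hσdef, if_pos h])
      · exact Or.inl (by rw [hσdef, if_neg h])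
    have hσu : σ * u i < 0 := by
      by_cases h : 0 < u i
      · rw [hσdef, if_pos h]; linarith
      · rw [hσdef, if_neg h]
        rcases lt_or_eq_of_le (not_lt.mp h) with h' | h'
        · linarith
        · exact absurd h' hui
    obtain ⟨h₀, sh, hsh0, hsh1, hheq, hhr, hhcl⟩ := seg_head p p v (by simpa using hr)
    have hvp : (v - p) i = - (t₀ * u i) := by
      rw [coord_sub, hpeq, coord_add_smul]; ring
    have hsegsub : ∀ z, z ∈ segment ℝ p h₀ → z ∈ e.carrier := by
      intro z hz
      rw [segment_eq_image'] at hz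
      obtain ⟨τ, hτ, hzeq⟩ := hz
      have hzeq2 : z = p + (τ * sh) • (v - p) := by
        rw [← hzeq, hheq]
        simp only [add_sub_cancel_left]
        rw [smul_smul]
      have hts : 0 ≤ τ * sh ∧ τ * sh ≤ 1 := by
        constructor
        · exact mul_nonneg hτ.1 hsh0.le
        · nlinarith [hτ.2, hsh1, hsh0, hτ.1]
      have hzray : z = v + ((1 - τ * sh) * t₀) • u := by
        rw [hzeq2, hpeq]
        module
      rw [hcar]
      constructor
      · refine ⟨(1 - τ * sh) * t₀, by nlinarith, ?_, hzray⟩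
        calc ENNReal.ofReal ((1 - τ * sh) * t₀) ≤ ENNReal.ofReal t₀ := by
              apply ENNReal.ofReal_le_ofReal
              nlinarith
          _ < T := ht₀T
      · apply hU
        rw [Metric.mem_closedBall, hzeq2]
        have : dist (p + (τ * sh) • (v - p)) p = (τ * sh) * dist v p := by
          rw [dist_eq_norm, dist_eq_norm]
          simp only [add_sub_cancel_left]
          rw [norm_smul, Real.norm_eq_abs, abs_of_nonneg hts.1, norm_sub_rev]
        rw [this]
        have hd : dist h₀ p = sh * dist v p := by
          rw [hheq, dist_eq_norm, dist_eq_norm]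
          simp only [add_sub_cancel_left]
          rw [norm_smul, Real.norm_eq_abs, abs_of_nonneg hsh0.le, norm_sub_rev]
        nlinarith [dist_nonneg (x := v) (y := p), hhr, hτ.1, hτ.2, hsh0]
    refine ⟨σ, hσ, h₀, ?_, hhr, ?_, ?_, ?_⟩
    · have h7 : h₀ i = p i + sh * (v - p) i := by rw [hheq, coord_add_smul]
      rw [h7, hvp]
      have key : σ * (p i + sh * (-(t₀ * u i))) - σ * p i = (sh * t₀) * (-(σ * u i)) := by
        ring
      nlinarith [mul_pos (mul_pos hsh0 ht₀pos) (neg_pos.mpr hσu), key]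
    · apply edist_le_hausdorff
      intro z hz
      exact hsegsub z hz.1
    · intro hlt
      rw [hhcl hlt, hends]
      exact ⟨by simp, hv⟩
    · intro x hxe hxgt ε hε hsm
      have hxv : x = v := by rw [hends] at hxe; simpa using hxe
      obtain ⟨θ, hθ, hsm⟩ := hsm
      set w : Euc n := (ε : ℝ) • e.wR with hwdef
      have hε0 : (ε : ℝ) ≠ 0 := by rcases hε with h | h <;> rw [h] <;> norm_num
      have hw : w ≠ 0 := smul_ne_zero hε0 hwR0
      have hθ2 : 0 < θ/2 := by linarith
      have hmemc : x + (θ/2) • w ∈ rayTo v u T := by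
        have := hsm (θ/2) (by linarith) (by linarith)
        rw [hcar] at this
        rw [hwdef, smul_smul]
        exact this.1
      obtain ⟨μ, hμ, hwμ⟩ := ray_dir hw hθ2 hmemc hxv
      have h1 : σ * w i = μ * (σ * u i) := by rw [hwμ, coord_smul]; ring
      have h3 : σ * w i = (ε : ℝ) * (σ * ((e.weight i : ℤ) : ℝ)) := by
        rw [hwdef, coord_smul, hwRi]; ring
      have key : (ε : ℝ) * (σ * ((e.weight i : ℤ) : ℝ)) = μ * (σ * u i) := by
        rw [← h3, h1]
      have key2 : σ * ((ε : ℝ) * ((e.weight i : ℤ) : ℝ))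
          = (ε : ℝ) * (σ * ((e.weight i : ℤ) : ℝ)) := by ring
      rw [key2, key]
      exact mul_neg_of_pos_of_neg hμ hσu

end Geo

/-- if G has area at most A and e is an edge with a relative interior
point p whose closed δ√n-ball is contained in U, then every component of the weight of
e is at most A/δ in absolute value. -/
theorem weight_bound (n : ℕ) (hn : 2 ≤ n) (A δ : ℝ) (hA : 0 < A) (hδ : 0 < δ)
    (U : Set (Euc n)) (hU : IsOpen U)
    (G : TropicalCurve n U) (hG : G.area ≤ ENNReal.ofReal A)
    (e : TropEdge n) (he : e ∈ G.edges)
    (p : Euc n) (hp : p ∈ e.carrier) (hp' : p ∉ e.ends)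
    (hball : Metric.closedBall p (δ * Real.sqrt n) ⊆ U) :
    ∀ i : Fin n, ((e.weight i).natAbs : ℝ) ≤ A / δ := by
  intro i
  classical
  have hn2 : (2:ℝ) ≤ (n:ℝ) := by exact_mod_cast hn
  have hn0 : (0:ℝ) < (n:ℝ) := by linarith
  set r : ℝ := δ * Real.sqrt n with hrdef
  have hr : 0 < r := mul_pos hδ (Real.sqrt_pos.mpr hn0)
  have hδr : δ ≤ r := by
    have h1 : 1 ≤ Real.sqrt n := by
      rw [show (1:ℝ) = Real.sqrt 1 from (Real.sqrt_one).symm]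
      exact Real.sqrt_le_sqrt (by linarith [hn2])
    nlinarith
  by_cases ha0 : (e.weight i).natAbs = 0
  · rw [ha0]
    have : (0:ℝ) ≤ A / δ := by positivity
    simpa using this
  set a : ℕ := (e.weight i).natAbs with hadef
  have ha1 : 1 ≤ a := Nat.one_le_iff_ne_zero.mpr ha0
  have hwne : ((e.weight i : ℤ) : ℝ) ≠ 0 := by
    simp only [Int.cast_ne_zero]
    exact Int.natAbs_ne_zero.mp ha0
  have hnatAbsR : ∀ f : TropEdge n, ((f.weight i).natAbs : ℝ) = |((f.weight i : ℤ) : ℝ)| := by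
    intro f
    rw [Nat.cast_natAbs, Int.cast_abs]
  -- main estimate
  have hmain : ENNReal.ofReal (δ * a) ≤ G.area := by
    obtain ⟨σ, hσ, h₀, hs0lt, hs0r, hs0meas, hs0cl, hs0dir⟩ :=
      dart_zero G he hp hp' hwne hr hball
    set hfun : Euc n → ℝ := fun x => σ * x i with hfundef
    set Act : TropEdge n → Prop := fun f => ∃ t h, DSpec i σ p r G.verts f t h with hActdef
    set tlF : TropEdge n → Euc n := fun f => if hf : Act f then hf.choose else p with htlFdef
    set hdF : TropEdge n → Euc n :=
      fun f => if hf : Act f then hf.choose_spec.choose else p with hhdFdef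
    have hchF : ∀ f, (hf : Act f) → DSpec i σ p r G.verts f (tlF f) (hdF f) := by
      intro f hf
      simp only [htlFdef, hhdFdef, dif_pos hf]
      exact hf.choose_spec.choose_spec
    set F : Finset (TropEdge n) := (G.edges.erase e).filter Act with hFdef
    set D : Finset (Option (TropEdge n)) := insert none (F.image Option.some) with hDdef
    set tl : Option (TropEdge n) → Euc n := fun o => o.elim p tlF with htldef
    set hdd : Option (TropEdge n) → Euc n := fun o => o.elim h₀ hdF with hhddef
    set cap : Option (TropEdge n) → ℕ :=
      fun o => o.elim a (fun f => (f.weight i).natAbs) with hcapdef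
    have hFe : ∀ f ∈ F, f ∈ G.edges ∧ f ≠ e ∧ Act f := by
      intro f hf
      rw [hFdef, Finset.mem_filter, Finset.mem_erase] at hf
      exact ⟨hf.1.2, hf.1.1, hf.2⟩
    have hD1 : ∀ d ∈ D, hfun (tl d) < hfun (hdd d) := by
      intro d hdm
      rw [hDdef, Finset.mem_insert] at hdm
      rcases hdm with h | h
      · rw [h]; exact hs0lt
      · rw [Finset.mem_image] at h
        obtain ⟨f, hfF, hfd⟩ := h
        rw [← hfd]
        exact (hchF f (hFe f hfF).2.2).1
    -- conservation
    have hcons : ∀ x : Euc n, hfun p < hfun x → dist x p < r →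
        (∑ d ∈ D.filter (fun d => hdd d = x), cap d) ≤
          ∑ d ∈ D.filter (fun d => tl d = x), cap d := by
      intro x hhx hxr
      by_cases hxv : x ∈ G.verts
      · obtain ⟨ε, hεprop, hεsum⟩ := G.balanced x hxv
        set S : Finset (TropEdge n) := G.edges.filter (fun f => x ∈ f.ends) with hSdef
        have hSmem : ∀ f ∈ S, f ∈ G.edges ∧ x ∈ f.ends := by
          intro f hf
          rw [hSdef, Finset.mem_filter] at hf
          exact hf
        set φ : TropEdge n → ℝ :=
          fun f => σ * ((ε f : ℝ) * ((f.weight i : ℤ) : ℝ)) with hφdef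
        have hφsum : ∑ f ∈ S, φ f = 0 := by
          have h1 : (∑ f ∈ S, ε f • f.weight) i = (0 : Fin n → ℤ) i := by
            rw [hεsum]
          rw [Finset.sum_apply] at h1
          have h2 : ∑ f ∈ S, (ε f * f.weight i) = 0 := by
            simpa [Pi.smul_apply, smul_eq_mul] using h1
          have h3 : ∑ f ∈ S, ((ε f : ℝ) * ((f.weight i : ℤ) : ℝ)) = 0 := by
            have := congrArg (fun z : ℤ => (z : ℝ)) h2
            push_cast at this
            simpa using this
          rw [hφdef, ← Finset.mul_sum, h3, mul_zero]
        have hφabs : ∀ f ∈ S, ((f.weight i).natAbs : ℝ) = |φ f| := by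
          intro f hf
          have hε1 := (hεprop f (hSmem f hf).1 (hSmem f hf).2).1
          rw [hnatAbsR f, hφdef]
          rw [abs_mul, abs_mul]
          have hσ1 : |σ| = 1 := by rcases hσ with h | h <;> rw [h] <;> norm_num
          have hε1' : |(ε f : ℝ)| = 1 := by rcases hε1 with h | h <;> rw [h] <;> norm_num
          rw [hσ1, hε1']
          ring
        set Spos : Finset (TropEdge n) := S.filter (fun f => 0 < φ f) with hSposdef
        set Sneg : Finset (TropEdge n) := S.filter (fun f => φ f < 0) with hSnegdef
        -- C' : sums of natAbs agree
        have hC : ∑ f ∈ Sneg, ((f.weight i).natAbs : ℝ)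
            = ∑ f ∈ Spos, ((f.weight i).natAbs : ℝ) := by
          have hsplit : ∑ f ∈ Spos, φ f + ∑ f ∈ S.filter (fun f => ¬ 0 < φ f), φ f = 0 := by
            rw [Finset.sum_filter_add_sum_filter_not]
            exact hφsum
          have hrest : ∑ f ∈ Sneg, φ f = ∑ f ∈ S.filter (fun f => ¬ 0 < φ f), φ f := by
            apply Finset.sum_subset
            · intro f hf
              rw [hSnegdef, Finset.mem_filter] at hf
              rw [Finset.mem_filter]
              exact ⟨hf.1, by linarith [hf.2]⟩
            · intro f hf hnf
              rw [Finset.mem_filter] at hf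
              rw [hSnegdef, Finset.mem_filter] at hnf
              push_neg at hnf
              have := hnf hf.1
              linarith [hf.2, this]
          have hposeq : ∑ f ∈ Spos, ((f.weight i).natAbs : ℝ) = ∑ f ∈ Spos, φ f := by
            apply Finset.sum_congr rfl
            intro f hf
            rw [hSposdef, Finset.mem_filter] at hf
            rw [hφabs f hf.1, abs_of_pos hf.2]
          have hnegeq : ∑ f ∈ Sneg, ((f.weight i).natAbs : ℝ) = - ∑ f ∈ Sneg, φ f := by
            rw [← Finset.sum_neg_distrib]
            apply Finset.sum_congr rfl
            intro f hf
            rw [hSnegdef, Finset.mem_filter] at hf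
            rw [hφabs f hf.1, abs_of_neg hf.2]
          rw [hposeq, hnegeq, hrest]
          linarith [hsplit]
        -- A' : in-darts bounded by Sneg
        have hA : (∑ d ∈ D.filter (fun d => hdd d = x), (cap d : ℝ))
            ≤ ∑ f ∈ Sneg, ((f.weight i).natAbs : ℝ) := by
          set ψ : Option (TropEdge n) → TropEdge n := fun o => o.elim e id with hψdef
          have hspec : ∀ d ∈ D.filter (fun d => hdd d = x),
              (cap d : ℝ) = ((ψ d).weight i |>.natAbs : ℝ) ∧ ψ d ∈ Sneg := by
            intro d hdm
            rw [Finset.mem_filter] at hdm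
            obtain ⟨hdD, hdx⟩ := hdm
            rw [hDdef, Finset.mem_insert] at hdD
            rcases hdD with h | h
            · subst h
              have hh₀x : h₀ = x := hdx
              have hxr' : dist h₀ p < r := by rw [hh₀x]; exact hxr
              obtain ⟨hxe, _⟩ := hs0cl hxr'
              rw [hh₀x] at hxe
              have heS : e ∈ S := by
                rw [hSdef, Finset.mem_filter]
                exact ⟨he, hxe⟩
              have hεe := hεprop e he hxe
              have hφe : φ e < 0 := hs0dir x hxe (by
                  have := hhx
                  rw [hfundef] at this
                  exact this) (ε e) hεe.1 hεe.2
              refine ⟨rfl, ?_⟩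
              rw [hSnegdef, Finset.mem_filter]
              exact ⟨heS, hφe⟩
            · rw [Finset.mem_image] at h
              obtain ⟨f, hfF, hfd⟩ := h
              subst hfd
              obtain ⟨hfE, hfne, hfA⟩ := hFe f hfF
              have hspec0 := hchF f hfA
              have hdfx : hdF f = x := hdx
              rw [hdfx] at hspec0
              obtain ⟨hxe, _⟩ := hspec0.2.2.2.2.2.2 hxr
              have hεf := hεprop f hfE hxe
              have hφf : φ f < 0 := dart_in G hfE hspec0 hxr hεf.1 hεf.2
              refine ⟨rfl, ?_⟩
              rw [hSnegdef, Finset.mem_filter, hSdef, Finset.mem_filter]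
              exact ⟨⟨hfE, hxe⟩, hφf⟩
          have hkey : ∀ d ∈ D.filter (fun d => hdd d = x), ∀ f : TropEdge n,
              d = some f → f ≠ e := by
            intro d hdm f hdf
            rw [Finset.mem_filter, hDdef, Finset.mem_insert] at hdm
            rcases hdm.1 with h | h
            · rw [hdf] at h
              exact absurd h (Option.some_ne_none f)
            · rw [Finset.mem_image] at h
              obtain ⟨f', hfF, hfd⟩ := h
              rw [hdf] at hfd
              have hff : f' = f := Option.some_injective _ hfd
              subst hff
              exact (hFe f' hfF).2.1
          have hinj : ∀ d1 ∈ D.filter (fun d => hdd d = x),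
              ∀ d2 ∈ D.filter (fun d => hdd d = x), ψ d1 = ψ d2 → d1 = d2 := by
            intro d1 h1 d2 h2 heq
            rcases d1 with _ | f1 <;> rcases d2 with _ | f2
            · rfl
            · exact absurd (by simpa [hψdef] using heq.symm) (hkey (some f2) h2 f2 rfl)
            · exact absurd (by simpa [hψdef] using heq) (hkey (some f1) h1 f1 rfl)
            · have : f1 = f2 := by simpa [hψdef] using heq
              rw [this]
          calc (∑ d ∈ D.filter (fun d => hdd d = x), (cap d : ℝ))
              = ∑ d ∈ D.filter (fun d => hdd d = x), (((ψ d).weight i |>.natAbs : ℕ) : ℝ) :=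
                Finset.sum_congr rfl (fun d hd => (hspec d hd).1)
            _ = ∑ f ∈ (D.filter (fun d => hdd d = x)).image ψ, ((f.weight i |>.natAbs : ℕ) : ℝ) := by
                rw [Finset.sum_image hinj]
            _ ≤ ∑ f ∈ Sneg, ((f.weight i).natAbs : ℝ) := by
                apply Finset.sum_le_sum_of_subset_of_nonneg
                · intro f hf
                  rw [Finset.mem_image] at hf
                  obtain ⟨d, hdm, hdf⟩ := hf
                  rw [← hdf]
                  exact (hspec d hdm).2
                · intro f _ _
                  positivity
        -- B' : Spos bounded by out-darts
        have hB : ∑ f ∈ Spos, ((f.weight i).natAbs : ℝ)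
            ≤ ∑ d ∈ D.filter (fun d => tl d = x), (cap d : ℝ) := by
          have hspec : ∀ f ∈ Spos, (Option.some f) ∈ D.filter (fun d => tl d = x) := by
            intro f hf
            rw [hSposdef, Finset.mem_filter] at hf
            obtain ⟨hfS, hφf⟩ := hf
            obtain ⟨hfE, hxe⟩ := hSmem f hfS
            have hεf := hεprop f hfE hxe
            have hφf2 : 0 < σ * ((ε f : ℝ) * ((f.weight i : ℤ) : ℝ)) := hφf
            have hfne : f ≠ e := by
              intro hfe
              subst hfe
              have := hs0dir x hxe (by rw [hfundef] at hhx; exact hhx) (ε f) hεf.1 hεf.2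
              linarith
            obtain ⟨⟨h', hspec'⟩, huniq⟩ :=
              dart_out G hr hball hfE hxe hxr hεf.2 hφf2
            have hfA : Act f := ⟨x, h', hspec'⟩
            have htlf : tlF f = x := huniq _ _ (hchF f hfA)
            rw [Finset.mem_filter]
            constructor
            · rw [hDdef, Finset.mem_insert]
              right
              rw [Finset.mem_image]
              exact ⟨f, by
                rw [hFdef, Finset.mem_filter, Finset.mem_erase]
                exact ⟨⟨hfne, hfE⟩, hfA⟩, rfl⟩
            · exact htlf
          calc ∑ f ∈ Spos, ((f.weight i).natAbs : ℝ)
              = ∑ d ∈ Spos.image Option.some, (cap d : ℝ) := by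
                rw [Finset.sum_image (by intro x1 _ x2 _ h; exact Option.some_injective _ h)]
                rfl
            _ ≤ ∑ d ∈ D.filter (fun d => tl d = x), (cap d : ℝ) := by
                apply Finset.sum_le_sum_of_subset_of_nonneg
                · intro d hdm
                  rw [Finset.mem_image] at hdm
                  obtain ⟨f, hfm, hfd⟩ := hdm
                  rw [← hfd]
                  exact hspec f hfm
                · intro d _ _
                  positivity
        -- combine
        have hfin : (∑ d ∈ D.filter (fun d => hdd d = x), (cap d : ℝ))
            ≤ ∑ d ∈ D.filter (fun d => tl d = x), (cap d : ℝ) := by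
          calc (∑ d ∈ D.filter (fun d => hdd d = x), (cap d : ℝ))
              ≤ ∑ f ∈ Sneg, ((f.weight i).natAbs : ℝ) := hA
            _ = ∑ f ∈ Spos, ((f.weight i).natAbs : ℝ) := hC
            _ ≤ _ := hB
        have := hfin
        rw [← Nat.cast_sum, ← Nat.cast_sum, Nat.cast_le] at this
        exact this
      · -- non-vertex: no in-darts
        have hempty : D.filter (fun d => hdd d = x) = ∅ := by
          rw [Finset.filter_eq_empty_iff]
          intro d hdD
          rw [hDdef, Finset.mem_insert] at hdD
          rcases hdD with h | h
          · subst h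
            intro hdx
            have hh₀x : h₀ = x := hdx
            have hxr' : dist h₀ p < r := by rw [hh₀x]; exact hxr
            have hv2 := (hs0cl hxr').2
            rw [hh₀x] at hv2
            exact hxv hv2
          · rw [Finset.mem_image] at h
            obtain ⟨f, hfF, hfd⟩ := h
            subst hfd
            intro hdx
            have hspec0 := hchF f (hFe f hfF).2.2
            have hdfx : hdF f = x := hdx
            rw [hdfx] at hspec0
            exact hxv (hspec0.2.2.2.2.2.2 hxr).2
        rw [hempty]
        simp
    -- apply the flow bound
    have hflow := flow_bound D tl hdd hfun p r hD1 a cap (by convert hcons) none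
      (by rw [hDdef]; exact Finset.mem_insert_self _ _) rfl (le_refl a)
    -- bound the dart sum by the area
    have harea : (∑ d ∈ D, (cap d : ℝ≥0∞) * edist (tl d) (hdd d)) ≤ G.area := by
      have hnone : (none : Option (TropEdge n)) ∉ F.image Option.some := by simp
      rw [hDdef, Finset.sum_insert hnone]
      have hterm0 : ((a : ℕ) : ℝ≥0∞) * edist p h₀ ≤ μH[1] e.carrier * (‖e.wR‖₊ : ℝ≥0∞) := by
        rw [mul_comm (μH[1] e.carrier)]
        exact mul_le_mul' (natAbs_coord_le_nnnorm e i) hs0meas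
      have htermf : ∀ f ∈ F, (cap (some f) : ℝ≥0∞) * edist (tl (some f)) (hdd (some f))
          ≤ μH[1] f.carrier * (‖f.wR‖₊ : ℝ≥0∞) := by
        intro f hfF
        have hspec0 := hchF f (hFe f hfF).2.2
        rw [mul_comm (μH[1] f.carrier)]
        exact mul_le_mul' (natAbs_coord_le_nnnorm f i) hspec0.2.2.2.1
      calc (cap none : ℝ≥0∞) * edist (tl none) (hdd none)
            + ∑ d ∈ F.image Option.some, (cap d : ℝ≥0∞) * edist (tl d) (hdd d)
          = ((a : ℕ) : ℝ≥0∞) * edist p h₀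
            + ∑ f ∈ F, (cap (some f) : ℝ≥0∞) * edist (tl (some f)) (hdd (some f)) := by
            rw [Finset.sum_image (by intro x1 _ x2 _ h; exact Option.some_injective _ h)]
            rfl
        _ ≤ μH[1] e.carrier * (‖e.wR‖₊ : ℝ≥0∞)
            + ∑ f ∈ F, μH[1] f.carrier * (‖f.wR‖₊ : ℝ≥0∞) := by
            exact add_le_add hterm0 (Finset.sum_le_sum htermf)
        _ ≤ μH[1] e.carrier * (‖e.wR‖₊ : ℝ≥0∞)
            + ∑ f ∈ G.edges.erase e, μH[1] f.carrier * (‖f.wR‖₊ : ℝ≥0∞) := by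
            have hFsub : F ⊆ G.edges.erase e := fun f hf => (Finset.mem_filter.mp hf).1
            gcongr
        _ = ∑ f ∈ G.edges, μH[1] f.carrier * (‖f.wR‖₊ : ℝ≥0∞) := by
            rw [add_comm, Finset.sum_erase_add G.edges _ he]
        _ = G.area := rfl
    -- chain the bounds
    calc ENNReal.ofReal (δ * a)
        = ENNReal.ofReal δ * ENNReal.ofReal (a : ℝ) := by
          rw [← ENNReal.ofReal_mul hδ.le]
      _ = ENNReal.ofReal δ * ((a : ℕ) : ℝ≥0∞) := by rw [ENNReal.ofReal_natCast]
      _ ≤ ENNReal.ofReal r * ((a : ℕ) : ℝ≥0∞) := by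
          gcongr
      _ = ((a : ℕ) : ℝ≥0∞) * ENNReal.ofReal r := mul_comm _ _
      _ ≤ ∑ d ∈ D, (cap d : ℝ≥0∞) * edist (tl d) (hdd d) := hflow
      _ ≤ G.area := harea
  -- conclude
  have hle : ENNReal.ofReal (δ * a) ≤ ENNReal.ofReal A := le_trans hmain hG
  have hreal : δ * a ≤ A := by
    have := (ENNReal.ofReal_le_ofReal_iff hA.le).mp hle
    exact this
  rw [le_div_iff₀ hδ]
  linarith
end
end
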